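/- Let O be an ALCHIQ ontology of depth 1. If for every irreflexive bouquet D that is consistent with O, has outdegree at most |O|, and uses only relations of O, there exists a 1-materialization of O and D, then O is materializable for the class of all such bouquets (i.e., each such bouquet has a full materialization, constructed as an increasing union of 1-materializability witnesses along frontier elements). -/

import Mathlib

/-- Description logic concepts (ALCHIQ syntax) over unary relation symbols `U` and binary
relation symbols `R`; roles are `Sum.inl r` (the relation `r`) and `Sum.inr r` (its
inverse `r⁻`). -/
inductive Cpt (U R : Type) : Type
  | top
  | bot
  | atom (A : U)
  | neg (C : Cpt U R)
  | conj (C D : Cpt U R)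
  | disj (C D : Cpt U R)
  | ex (ρ : R ⊕ R) (C : Cpt U R)
  | all (ρ : R ⊕ R) (C : Cpt U R)
  | atLeast (n : ℕ) (ρ : R ⊕ R) (C : Cpt U R)
  | atMost (n : ℕ) (ρ : R ⊕ R) (C : Cpt U R)

/-- Semantics of roles. -/
def rsem {R W : Type} (bin : R → Set (W × W)) : R ⊕ R → Set (W × W)
  | Sum.inl r => bin r
  | Sum.inr r => {p | (p.2, p.1) ∈ bin r}

/-- Semantics of concepts in the interpretation with carrier `W` given by `un` and `bin`. -/
def Cpt.sem {U R W : Type} (un : U → Set W) (bin : R → Set (W × W)) : Cpt U R → Set W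
  | .top => Set.univ
  | .bot => ∅
  | .atom A => un A
  | .neg C => (C.sem un bin)ᶜ
  | .conj C D => C.sem un bin ∩ D.sem un bin
  | .disj C D => C.sem un bin ∪ D.sem un bin
  | .ex ρ C => {x | ∃ y, (x, y) ∈ rsem bin ρ ∧ y ∈ C.sem un bin}
  | .all ρ C => {x | ∀ y, (x, y) ∈ rsem bin ρ → y ∈ C.sem un bin}
  | .atLeast n ρ C =>
      {x | ∃ Y : Finset W, Y.card = n ∧ ∀ y ∈ Y, (x, y) ∈ rsem bin ρ ∧ y ∈ C.sem un bin}
  | .atMost n ρ C =>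
      {x | ∀ Y : Finset W, (∀ y ∈ Y, (x, y) ∈ rsem bin ρ ∧ y ∈ C.sem un bin) → Y.card ≤ n}

/-- The depth (quantifier nesting depth) of a concept. -/
def Cpt.depth {U R : Type} : Cpt U R → ℕ
  | .top => 0
  | .bot => 0
  | .atom _ => 0
  | .neg C => C.depth
  | .conj C D => max C.depth D.depth
  | .disj C D => max C.depth D.depth
  | .ex _ C => C.depth + 1
  | .all _ C => C.depth + 1
  | .atLeast _ _ C => C.depth + 1
  | .atMost _ _ C => C.depth + 1

/-- Finite conjunction of a list of concepts. -/
def bigConj {U R : Type} (l : List (Cpt U R)) : Cpt U R := l.foldr .conj .top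

/-- Finite disjunction of a list of concepts. -/
def bigDisj {U R : Type} (l : List (Cpt U R)) : Cpt U R := l.foldr .disj .bot

/-- A description logic ontology: concept inclusions and role inclusions. -/
structure DLOnt (U R : Type) where
  CIs : Set (Cpt U R × Cpt U R)
  RIs : Set ((R ⊕ R) × (R ⊕ R))

/-- Satisfaction of an ontology in an interpretation. -/
def DLOnt.Sat {U R W : Type} (O : DLOnt U R) (un : U → Set W)
    (bin : R → Set (W × W)) : Prop :=
  (∀ p ∈ O.CIs, p.1.sem un bin ⊆ p.2.sem un bin) ∧
  (∀ p ∈ O.RIs, rsem bin p.1 ⊆ rsem bin p.2)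

/-- A database instance over the DL signature, with constants from `V`. -/
structure DLInst (U R V : Type) where
  un : U → Set V
  bin : R → Set (V × V)

/-- The domain of an instance: the constants occurring in some fact. -/
def DLInst.dom {U R V : Type} (D : DLInst U R V) : Set V :=
  {v | (∃ u, v ∈ D.un u) ∨ ∃ r w, (v, w) ∈ D.bin r ∨ (w, v) ∈ D.bin r}

/-- `(W, ι, un, bin)` is a model of the ontology `O` and the instance `D` (standard
names: `ι` injective, facts of `D` preserved). -/
def IsDLMod {U R V W : Type} (O : DLOnt U R) (D : DLInst U R V) (ι : V → W)
    (un : U → Set W) (bin : R → Set (W × W)) : Prop :=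
  Function.Injective ι ∧
  (∀ u v, v ∈ D.un u → ι v ∈ un u) ∧
  (∀ r p, p ∈ D.bin r → (ι p.1, ι p.2) ∈ bin r) ∧
  O.Sat un bin

/-- A conjunctive query of arity `k` over the DL signature, given by its finite canonical
database and its answer variables. -/
structure DLCQ (U R : Type) (k : ℕ) where
  V : Type
  finV : Finite V
  un : U → Set V
  bin : R → Set (V × V)
  finUn : {p : U × V | p.2 ∈ un p.1}.Finite
  finBin : {p : R × (V × V) | p.2 ∈ bin p.1}.Finite
  ans : Fin k → V

/-- `t` is an answer to the CQ `q` in the interpretation `(un, bin)`. -/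
def DLCQAns {U R W : Type} {k : ℕ} (un : U → Set W) (bin : R → Set (W × W))
    (q : DLCQ U R k) (t : Fin k → W) : Prop :=
  ∃ h : q.V → W, (∀ u v, v ∈ q.un u → h v ∈ un u) ∧
    (∀ r p, p ∈ q.bin r → (h p.1, h p.2) ∈ bin r) ∧ h ∘ q.ans = t

/-- `a` is a certain answer to the UCQ `qs` on `D` given `O`. -/
def DLCertainUCQ {U R V : Type} {k : ℕ} (O : DLOnt U R) (D : DLInst U R V)
    (qs : List (DLCQ U R k)) (a : Fin k → V) : Prop :=
  ∀ (W : Type) (ι : V → W) (un : U → Set W) (bin : R → Set (W × W)),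
    IsDLMod O D ι un bin → ∃ q ∈ qs, DLCQAns un bin q (ι ∘ a)

/-- `D` is consistent w.r.t. `O`. -/
def DLConsistent {U R V : Type} (O : DLOnt U R) (D : DLInst U R V) : Prop :=
  ∃ (W : Type) (ι : V → W) (un : U → Set W) (bin : R → Set (W × W)),
    IsDLMod O D ι un bin

/-- `(W, ι, un, bin)` is a materialization of `O` and `D`: a model whose UCQ-answers over
the domain of `D` are exactly the certain answers. -/
def IsDLMat {U R V W : Type} (O : DLOnt U R) (D : DLInst U R V) (ι : V → W)
    (un : U → Set W) (bin : R → Set (W × W)) : Prop :=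
  IsDLMod O D ι un bin ∧
  ∀ (k : ℕ) (qs : List (DLCQ U R k)) (a : Fin k → V), (∀ i, a i ∈ D.dom) →
    ((∃ q ∈ qs, DLCQAns un bin q (ι ∘ a)) ↔ DLCertainUCQ O D qs a)

/-- `O` is materializable: every consistent instance has a materialization. -/
def DLMaterializable {U R : Type} (O : DLOnt U R) : Prop :=
  ∀ (V : Type) (D : DLInst U R V), DLConsistent O D →
    ∃ (W : Type) (ι : V → W) (un : U → Set W) (bin : R → Set (W × W)),
      IsDLMat O D ι un bin

/-- `O` is materializable for the class `Mc` of instances. -/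
def DLMaterializableFor {U R : Type} (O : DLOnt U R)
    (Mc : ∀ V : Type, DLInst U R V → Prop) : Prop :=
  ∀ (V : Type) (D : DLInst U R V), Mc V D → DLConsistent O D →
    ∃ (W : Type) (ι : V → W) (un : U → Set W) (bin : R → Set (W × W)),
      IsDLMat O D ι un bin

/-- The size of a concept (number of symbols, numbers in counting quantifiers in unary). -/
def Cpt.size {U R : Type} : Cpt U R → ℕ
  | .top => 1
  | .bot => 1
  | .atom _ => 1
  | .neg C => C.size + 1
  | .conj C D => C.size + D.size + 1
  | .disj C D => C.size + D.size + 1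
  | .ex _ C => C.size + 2
  | .all _ C => C.size + 2
  | .atLeast m _ C => C.size + m + 2
  | .atMost m _ C => C.size + m + 2

/-- The unary relation symbols occurring in a concept. -/
def Cpt.sigU {U R : Type} : Cpt U R → Set U
  | .top => ∅
  | .bot => ∅
  | .atom A => {A}
  | .neg C => C.sigU
  | .conj C D => C.sigU ∪ D.sigU
  | .disj C D => C.sigU ∪ D.sigU
  | .ex _ C => C.sigU
  | .all _ C => C.sigU
  | .atLeast _ _ C => C.sigU
  | .atMost _ _ C => C.sigU

/-- The underlying binary relation symbol of a role. -/
def roleBase {R : Type} : R ⊕ R → R := Sum.elim id id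

/-- The binary relation symbols occurring in a concept. -/
def Cpt.sigR {U R : Type} : Cpt U R → Set R
  | .top => ∅
  | .bot => ∅
  | .atom _ => ∅
  | .neg C => C.sigR
  | .conj C D => C.sigR ∪ D.sigR
  | .disj C D => C.sigR ∪ D.sigR
  | .ex ρ C => insert (roleBase ρ) C.sigR
  | .all ρ C => insert (roleBase ρ) C.sigR
  | .atLeast _ ρ C => insert (roleBase ρ) C.sigR
  | .atMost _ ρ C => insert (roleBase ρ) C.sigR

/-- An ALCHIQ ontology, given by finite lists of concept inclusions and role inclusions. -/
structure DLOntL (U R : Type) where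
  CIs : List (Cpt U R × Cpt U R)
  RIs : List ((R ⊕ R) × (R ⊕ R))

/-- The underlying (set-based) ontology. -/
def DLOntL.toOnt {U R : Type} (O : DLOntL U R) : DLOnt U R :=
  ⟨{p | p ∈ O.CIs}, {p | p ∈ O.RIs}⟩

/-- The size `|O|` of an ontology. -/
def DLOntL.size {U R : Type} (O : DLOntL U R) : ℕ :=
  (O.CIs.map fun p => p.1.size + p.2.size + 1).sum + 3 * O.RIs.length

/-- `O` has depth at most `d`. -/
def DLOntL.depthLE {U R : Type} (O : DLOntL U R) (d : ℕ) : Prop :=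
  ∀ p ∈ O.CIs, p.1.depth ≤ d ∧ p.2.depth ≤ d

/-- The unary relation symbols of `O`. -/
def DLOntL.sigU {U R : Type} (O : DLOntL U R) : Set U :=
  {u | ∃ p ∈ O.CIs, u ∈ p.1.sigU ∪ p.2.sigU}

/-- The binary relation symbols of `O`. -/
def DLOntL.sigR {U R : Type} (O : DLOntL U R) : Set R :=
  {r | (∃ p ∈ O.CIs, r ∈ p.1.sigR ∪ p.2.sigR) ∨
    ∃ p ∈ O.RIs, r = roleBase p.1 ∨ r = roleBase p.2}

/-- `D` uses only relation symbols of `O`. -/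
def SigIn {U R V : Type} (D : DLInst U R V) (O : DLOntL U R) : Prop :=
  (∀ u, (D.un u).Nonempty → u ∈ O.sigU) ∧ (∀ r, (D.bin r).Nonempty → r ∈ O.sigR)

/-- The neighbours of `a` in the instance `D`. -/
def Nb {U R V : Type} (D : DLInst U R V) (a : V) : Set V :=
  {v | v ≠ a ∧ ∃ r, (a, v) ∈ D.bin r ∨ (v, a) ∈ D.bin r}

/-- `D` is a bouquet with root `a`: it equals the 1-neighbourhood of `a`. -/
def IsBouquet {U R V : Type} (D : DLInst U R V) (a : V) : Prop :=
  a ∈ D.dom ∧ ∀ v ∈ D.dom, v = a ∨ v ∈ Nb D a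

/-- `D` is irreflexive: it contains no atom `r(v,v)`. -/
def Irrefl {U R V : Type} (D : DLInst U R V) : Prop := ∀ r v, (v, v) ∉ D.bin r

/-- The outdegree of the bouquet `D` with root `a` is at most `m`. -/
def OutdegLE {U R V : Type} (D : DLInst U R V) (a : V) (m : ℕ) : Prop :=
  (Nb D a).Finite ∧ (Nb D a).ncard ≤ m

/-- The 1-neighbourhood of `w` in the interpretation given by `bin`. -/
def NbhdM {R W : Type} (bin : R → Set (W × W)) (w : W) : Set W :=
  {x | x = w ∨ ∃ r, (w, x) ∈ bin r ∨ (x, w) ∈ bin r}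

/-- There is a 1-materialization of `O` and the bouquet `D` with root `a`: a model of `O`
and `D` whose 1-neighbourhood of the root admits, into every model of `O` and `D`, a
homomorphism preserving the domain of `D`. -/
def OneMaterializable {U R V : Type} (O : DLOntL U R) (D : DLInst U R V) (a : V) : Prop :=
  ∃ (W : Type) (ι : V → W) (un : U → Set W) (bin : R → Set (W × W)),
    IsDLMod O.toOnt D ι un bin ∧
    ∀ (W' : Type) (ι' : V → W') (un' : U → Set W') (bin' : R → Set (W' × W')),
      IsDLMod O.toOnt D ι' un' bin' →
      ∃ g : W → W',
        (∀ u x, x ∈ NbhdM bin (ι a) → x ∈ un u → g x ∈ un' u) ∧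
        (∀ r x y, x ∈ NbhdM bin (ι a) → y ∈ NbhdM bin (ι a) →
          (x, y) ∈ bin r → (g x, g y) ∈ bin' r) ∧
        (∀ d ∈ D.dom, g (ι d) = ι' d)

section Aux

attribute [local instance] Classical.propDecidable

variable {U R : Type}

lemma mem_nbhd_self {W : Type} (bin : R → Set (W × W)) (x : W) : x ∈ NbhdM bin x :=
  Or.inl rfl

lemma mem_nbhd_of_edge {W : Type} {bin : R → Set (W × W)} {x y : W} {r : R}
    (h : (x, y) ∈ bin r ∨ (y, x) ∈ bin r) : y ∈ NbhdM bin x := Or.inr ⟨r, h⟩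

lemma rsem_succ_nbhd {W : Type} {bin : R → Set (W × W)} {ρ : R ⊕ R} {x y : W}
    (h : (x, y) ∈ rsem bin ρ) : y ∈ NbhdM bin x := by
  cases ρ with
  | inl r => exact Or.inr ⟨r, Or.inl h⟩
  | inr r => exact Or.inr ⟨r, Or.inr h⟩

lemma depth0_sem {W W' : Type} {un : U → Set W} {bin : R → Set (W × W)}
    {un' : U → Set W'} {bin' : R → Set (W' × W')} {x : W} {x' : W'}
    (hu : ∀ u, x ∈ un u ↔ x' ∈ un' u) :
    ∀ (C : Cpt U R), C.depth = 0 → (x ∈ C.sem un bin ↔ x' ∈ C.sem un' bin')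
  | .top, _ => by simp [Cpt.sem]
  | .bot, _ => by simp [Cpt.sem]
  | .atom A, _ => hu A
  | .neg C, h => by
      simp only [Cpt.sem, Set.mem_compl_iff]
      exact not_congr (depth0_sem hu C h)
  | .conj C D, h => by
      have h' : C.depth = 0 ∧ D.depth = 0 := by
        simpa [Cpt.depth, Nat.max_eq_zero_iff] using h
      simp only [Cpt.sem, Set.mem_inter_iff]
      exact and_congr (depth0_sem hu C h'.1) (depth0_sem hu D h'.2)
  | .disj C D, h => by
      have h' : C.depth = 0 ∧ D.depth = 0 := by
        simpa [Cpt.depth, Nat.max_eq_zero_iff] using h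
      simp only [Cpt.sem, Set.mem_union]
      exact or_congr (depth0_sem hu C h'.1) (depth0_sem hu D h'.2)
  | .ex ρ C, h => by simp [Cpt.depth] at h
  | .all ρ C, h => by simp [Cpt.depth] at h
  | .atLeast n ρ C, h => by simp [Cpt.depth] at h
  | .atMost n ρ C, h => by simp [Cpt.depth] at h

lemma star_transfer {W W' : Type} {un : U → Set W} {bin : R → Set (W × W)}
    {un' : U → Set W'} {bin' : R → Set (W' × W')} {x : W} {x' : W'} {φ : W → W'}
    (hx : φ x = x')
    (hinj : Set.InjOn φ (NbhdM bin x))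
    (hsur : NbhdM bin' x' ⊆ φ '' NbhdM bin x)
    (hun : ∀ u, ∀ y ∈ NbhdM bin x, (y ∈ un u ↔ φ y ∈ un' u))
    (hr1 : ∀ r, ∀ y ∈ NbhdM bin x, ((x, y) ∈ bin r ↔ (x', φ y) ∈ bin' r))
    (hr2 : ∀ r, ∀ y ∈ NbhdM bin x, ((y, x) ∈ bin r ↔ (φ y, x') ∈ bin' r)) :
    ∀ (C : Cpt U R), C.depth ≤ 1 → (x ∈ C.sem un bin ↔ x' ∈ C.sem un' bin') := by
  have hxS : x ∈ NbhdM bin x := mem_nbhd_self bin x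
  have hρ : ∀ (ρ : R ⊕ R), ∀ y ∈ NbhdM bin x,
      ((x, y) ∈ rsem bin ρ ↔ (x', φ y) ∈ rsem bin' ρ) := by
    intro ρ y hy; cases ρ with
    | inl r => exact hr1 r y hy
    | inr r => exact hr2 r y hy
  obtain ⟨ψ, hψ⟩ : ∃ ψ : W' → W, ∀ y' ∈ NbhdM bin' x', ψ y' ∈ NbhdM bin x ∧ φ (ψ y') = y' := by
    classical
    choose f hf1 hf2 using fun (y' : W') (h : y' ∈ NbhdM bin' x') => hsur h
    exact ⟨fun y' => if h : y' ∈ NbhdM bin' x' then f y' h else x,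
      fun y' h => by simp only [dif_pos h]; exact ⟨hf1 y' h, hf2 y' h⟩⟩
  intro C
  induction C with
  | top => intro _; simp [Cpt.sem]
  | bot => intro _; simp [Cpt.sem]
  | atom A => intro _; exact (hun A x hxS).trans (by rw [hx]; exact Iff.rfl)
  | neg C ih =>
      intro hC
      simp only [Cpt.sem, Set.mem_compl_iff]
      exact not_congr (ih hC)
  | conj C D ihC ihD =>
      intro hC
      have h' : C.depth ≤ 1 ∧ D.depth ≤ 1 := by
        simpa [Cpt.depth] using hC
      simp only [Cpt.sem, Set.mem_inter_iff]
      exact and_congr (ihC h'.1) (ihD h'.2)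
  | disj C D ihC ihD =>
      intro hC
      have h' : C.depth ≤ 1 ∧ D.depth ≤ 1 := by
        simpa [Cpt.depth] using hC
      simp only [Cpt.sem, Set.mem_union]
      exact or_congr (ihC h'.1) (ihD h'.2)
  | ex ρ C ih =>
      intro hC
      have hC0 : C.depth = 0 := by simp only [Cpt.depth] at hC; omega
      simp only [Cpt.sem, Set.mem_setOf_eq]
      constructor
      · rintro ⟨y, hxy, hy⟩
        have hyS := rsem_succ_nbhd hxy
        exact ⟨φ y, (hρ ρ y hyS).1 hxy, (depth0_sem (fun u => hun u y hyS) C hC0).1 hy⟩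
      · rintro ⟨y', hxy', hy'⟩
        obtain ⟨hyS, hφ⟩ := hψ y' (rsem_succ_nbhd hxy')
        refine ⟨ψ y', (hρ ρ _ hyS).2 (by rw [hφ]; exact hxy'), ?_⟩
        exact (depth0_sem (x := ψ y') (x' := y') (fun u => (hun u _ hyS).trans (by rw [hφ])) C hC0).2 hy'
  | all ρ C ih =>
      intro hC
      have hC0 : C.depth = 0 := by simp only [Cpt.depth] at hC; omega
      simp only [Cpt.sem, Set.mem_setOf_eq]
      constructor
      · intro h y' hxy'
        obtain ⟨hyS, hφ⟩ := hψ y' (rsem_succ_nbhd hxy')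
        have hxy : (x, ψ y') ∈ rsem bin ρ := (hρ ρ _ hyS).2 (by rw [hφ]; exact hxy')
        exact (depth0_sem (x := ψ y') (x' := y') (fun u => (hun u _ hyS).trans (by rw [hφ])) C hC0).1 (h _ hxy)
      · intro h y hxy
        have hyS := rsem_succ_nbhd hxy
        exact (depth0_sem (fun u => hun u y hyS) C hC0).2 (h _ ((hρ ρ y hyS).1 hxy))
  | atLeast n ρ C ih =>
      intro hC
      have hC0 : C.depth = 0 := by simp only [Cpt.depth] at hC; omega
      simp only [Cpt.sem, Set.mem_setOf_eq]
      constructor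
      · rintro ⟨Y, hcard, hY⟩
        refine ⟨Y.image φ, ?_, ?_⟩
        · rw [Finset.card_image_of_injOn (fun y hy y2 hy2 heq =>
            hinj (rsem_succ_nbhd (hY y hy).1) (rsem_succ_nbhd (hY y2 hy2).1) heq)]
          exact hcard
        · intro y' hy'
          obtain ⟨y, hy, rfl⟩ := Finset.mem_image.1 hy'
          have hyS := rsem_succ_nbhd (hY y hy).1
          exact ⟨(hρ ρ y hyS).1 (hY y hy).1,
            (depth0_sem (fun u => hun u y hyS) C hC0).1 (hY y hy).2⟩
      · rintro ⟨Y', hcard, hY'⟩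
        refine ⟨Y'.image ψ, ?_, ?_⟩
        · rw [Finset.card_image_of_injOn (fun a ha b hb heq => by
            have h1 := (hψ a (rsem_succ_nbhd (hY' a ha).1)).2
            have h2 := (hψ b (rsem_succ_nbhd (hY' b hb).1)).2
            rw [← h1, ← h2, heq])]
          exact hcard
        · intro y hy
          obtain ⟨y', hy', rfl⟩ := Finset.mem_image.1 hy
          obtain ⟨hyS, hφ⟩ := hψ y' (rsem_succ_nbhd (hY' y' hy').1)
          exact ⟨(hρ ρ _ hyS).2 (by rw [hφ]; exact (hY' y' hy').1),
            (depth0_sem (x := ψ y') (x' := y') (fun u => (hun u _ hyS).trans (by rw [hφ])) C hC0).2 (hY' y' hy').2⟩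
  | atMost n ρ C ih =>
      intro hC
      have hC0 : C.depth = 0 := by simp only [Cpt.depth] at hC; omega
      simp only [Cpt.sem, Set.mem_setOf_eq]
      constructor
      · intro h Y' hY'
        have hcard : (Y'.image ψ).card = Y'.card :=
          Finset.card_image_of_injOn (fun a ha b hb heq => by
            have h1 := (hψ a (rsem_succ_nbhd (hY' a ha).1)).2
            have h2 := (hψ b (rsem_succ_nbhd (hY' b hb).1)).2
            rw [← h1, ← h2, heq])
        rw [← hcard]
        apply h
        intro y hy
        obtain ⟨y', hy', rfl⟩ := Finset.mem_image.1 hy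
        obtain ⟨hyS, hφ⟩ := hψ y' (rsem_succ_nbhd (hY' y' hy').1)
        exact ⟨(hρ ρ _ hyS).2 (by rw [hφ]; exact (hY' y' hy').1),
          (depth0_sem (x := ψ y') (x' := y') (fun u => (hun u _ hyS).trans (by rw [hφ])) C hC0).2 (hY' y' hy').2⟩
      · intro h Y hY
        have hcard : (Y.image φ).card = Y.card :=
          Finset.card_image_of_injOn (fun y hy y2 hy2 heq =>
            hinj (rsem_succ_nbhd (hY y hy).1) (rsem_succ_nbhd (hY y2 hy2).1) heq)
        rw [← hcard]
        apply h
        intro y' hy'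
        obtain ⟨y, hy, rfl⟩ := Finset.mem_image.1 hy'
        have hyS := rsem_succ_nbhd (hY y hy).1
        exact ⟨(hρ ρ y hyS).1 (hY y hy).1,
          (depth0_sem (fun u => hun u y hyS) C hC0).1 (hY y hy).2⟩

/-! ### Loop-killing doubling -/

def lkUn {U W : Type} (un : U → Set W) : U → Set (W × Bool) := fun u => {p | p.1 ∈ un u}

def lkBin {R W : Type} (bin : R → Set (W × W)) : R → Set ((W × Bool) × (W × Bool)) :=
  fun r => {p | (p.1.1, p.2.1) ∈ bin r ∧ p.2.2 = (if p.2.1 = p.1.1 then !p.1.2 else p.1.2)}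

lemma lk_rsem {W : Type} (bin : R → Set (W × W)) (ρ : R ⊕ R) (p : (W × Bool) × (W × Bool)) :
    p ∈ rsem (lkBin bin) ρ ↔
      ((p.1.1, p.2.1) ∈ rsem bin ρ ∧ p.2.2 = (if p.2.1 = p.1.1 then !p.1.2 else p.1.2)) := by
  have hcond : ∀ (a b : W) (i j : Bool),
      (j = (if b = a then !i else i)) ↔ (i = (if a = b then !j else j)) := by
    intro a b i j
    by_cases h : a = b
    · subst h; simp only [if_pos rfl]; cases i <;> cases j <;> simp
    · simp only [if_neg h, if_neg (Ne.symm h), eq_comm]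
  cases ρ with
  | inl r => exact Iff.rfl
  | inr r =>
    show ((p.2.1, p.1.1) ∈ bin r ∧ p.1.2 = _) ↔ _
    exact and_congr Iff.rfl (hcond p.1.1 p.2.1 p.1.2 p.2.2).symm

lemma lk_sem {W : Type} (un : U → Set W) (bin : R → Set (W × W)) :
    ∀ (C : Cpt U R) (p : W × Bool), p ∈ C.sem (lkUn un) (lkBin bin) ↔ p.1 ∈ C.sem un bin := by
  intro C
  induction C with
  | top => intro p; simp [Cpt.sem]
  | bot => intro p; simp [Cpt.sem]
  | atom A => intro p; exact Iff.rfl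
  | neg C ih =>
      intro p; simp only [Cpt.sem, Set.mem_compl_iff]; exact not_congr (ih p)
  | conj C D ihC ihD =>
      intro p; simp only [Cpt.sem, Set.mem_inter_iff]; exact and_congr (ihC p) (ihD p)
  | disj C D ihC ihD =>
      intro p; simp only [Cpt.sem, Set.mem_union]; exact or_congr (ihC p) (ihD p)
  | ex ρ C ih =>
      intro p
      simp only [Cpt.sem, Set.mem_setOf_eq]
      constructor
      · rintro ⟨q, hq, hq2⟩
        rw [lk_rsem] at hq
        exact ⟨q.1, hq.1, (ih q).1 hq2⟩
      · rintro ⟨w, hw, hw2⟩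
        refine ⟨(w, if w = p.1 then !p.2 else p.2), ?_, (ih _).2 hw2⟩
        rw [lk_rsem]; exact ⟨hw, rfl⟩
  | all ρ C ih =>
      intro p
      simp only [Cpt.sem, Set.mem_setOf_eq]
      constructor
      · intro h w hw
        exact (ih (w, if w = p.1 then !p.2 else p.2)).1
          (h _ (by rw [lk_rsem]; exact ⟨hw, rfl⟩))
      · intro h q hq
        rw [lk_rsem] at hq
        exact (ih q).2 (h q.1 hq.1)
  | atLeast n ρ C ih =>
      intro p
      simp only [Cpt.sem, Set.mem_setOf_eq]
      constructor
      · rintro ⟨Y, hc, hY⟩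
        refine ⟨Y.image Prod.fst, ?_, ?_⟩
        · rw [Finset.card_image_of_injOn (fun q hq q' hq' he => by
            have h1 := (hY q hq).1; have h2 := (hY q' hq').1
            rw [lk_rsem] at h1 h2
            exact Prod.ext he (by rw [h1.2, h2.2, he]))]
          exact hc
        · intro w hw
          obtain ⟨q, hq, rfl⟩ := Finset.mem_image.1 hw
          obtain ⟨h1, h2⟩ := hY q hq
          rw [lk_rsem] at h1
          exact ⟨h1.1, (ih q).1 h2⟩
      · rintro ⟨Y, hc, hY⟩
        refine ⟨Y.image (fun w => (w, if w = p.1 then !p.2 else p.2)), ?_, ?_⟩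
        · rw [Finset.card_image_of_injOn (fun a _ b _ he => congrArg Prod.fst he)]
          exact hc
        · intro q hq
          obtain ⟨w, hw, rfl⟩ := Finset.mem_image.1 hq
          exact ⟨by rw [lk_rsem]; exact ⟨(hY w hw).1, rfl⟩, (ih _).2 (hY w hw).2⟩
  | atMost n ρ C ih =>
      intro p
      simp only [Cpt.sem, Set.mem_setOf_eq]
      constructor
      · intro h Y hY
        have hcard : (Y.image (fun w => (w, if w = p.1 then !p.2 else p.2))).card = Y.card :=
          Finset.card_image_of_injOn (fun a _ b _ he => congrArg Prod.fst he)
        rw [← hcard]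
        apply h
        intro q hq
        obtain ⟨w, hw, rfl⟩ := Finset.mem_image.1 hq
        exact ⟨by rw [lk_rsem]; exact ⟨(hY w hw).1, rfl⟩, (ih _).2 (hY w hw).2⟩
      · intro h Y hY
        have hcard : (Y.image Prod.fst).card = Y.card :=
          Finset.card_image_of_injOn (fun q hq q' hq' he => by
            have h1 := (hY q hq).1; have h2 := (hY q' hq').1
            rw [lk_rsem] at h1 h2
            exact Prod.ext he (by rw [h1.2, h2.2, he]))
        rw [← hcard]
        apply h
        intro w hw
        obtain ⟨q, hq, rfl⟩ := Finset.mem_image.1 hw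
        obtain ⟨h1, h2⟩ := hY q hq
        rw [lk_rsem] at h1
        exact ⟨h1.1, (ih q).1 h2⟩

lemma lk_mod {V W : Type} {O : DLOnt U R} {D : DLInst U R V} {ι : V → W}
    {un : U → Set W} {bin : R → Set (W × W)} (h : IsDLMod O D ι un bin) (hir : Irrefl D) :
    IsDLMod O D (fun d => (ι d, true)) (lkUn un) (lkBin bin) := by
  obtain ⟨hinj, hu, hbin, hsat⟩ := h
  refine ⟨?_, ?_, ?_, ?_, ?_⟩
  · intro d e he
    exact hinj (congrArg Prod.fst he)
  · intro u v hv; exact hu u v hv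
  · intro r p hp
    refine ⟨hbin r p hp, ?_⟩
    have hne : ι p.2 ≠ ι p.1 := by
      intro he
      have hp' : (p.1, p.2) ∈ D.bin r := hp
      rw [hinj he.symm] at hp'
      exact hir r p.2 hp'
    rw [if_neg hne]
  · intro p hp q hq
    exact (lk_sem un bin p.2 q).2 (hsat.1 p hp ((lk_sem un bin p.1 q).1 hq))
  · intro p hp q hq
    rw [lk_rsem] at hq ⊢
    exact ⟨hsat.2 p hp hq.1, hq.2⟩

lemma lk_loopfree {W : Type} (bin : R → Set (W × W)) : ∀ (r : R) (q : W × Bool), (q, q) ∉ lkBin bin r := by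
  intro r q hq
  have := hq.2
  simp at this

/-! ### Restriction to a signature -/

lemma rsem_congr {W : Type} {bin bin' : R → Set (W × W)} {ρ : R ⊕ R}
    (h : bin (roleBase ρ) = bin' (roleBase ρ)) : rsem bin ρ = rsem bin' ρ := by
  cases ρ with
  | inl r => exact h
  | inr r => show {p | _ ∈ bin r} = {p | _ ∈ bin' r}; rw [show bin r = bin' r from h]

lemma sem_congr {W : Type} {un un' : U → Set W} {bin bin' : R → Set (W × W)} :
    ∀ (C : Cpt U R), (∀ u ∈ C.sigU, un u = un' u) → (∀ r ∈ C.sigR, bin r = bin' r) →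
      C.sem un bin = C.sem un' bin'
  | .top, _, _ => rfl
  | .bot, _, _ => rfl
  | .atom A, hu, _ => hu A rfl
  | .neg C, hu, hb => by
      simp only [Cpt.sem]; rw [sem_congr C hu hb]
  | .conj C D, hu, hb => by
      simp only [Cpt.sem]
      rw [sem_congr C (fun u h => hu u (Or.inl h)) (fun r h => hb r (Or.inl h)),
        sem_congr D (fun u h => hu u (Or.inr h)) (fun r h => hb r (Or.inr h))]
  | .disj C D, hu, hb => by
      simp only [Cpt.sem]
      rw [sem_congr C (fun u h => hu u (Or.inl h)) (fun r h => hb r (Or.inl h)),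
        sem_congr D (fun u h => hu u (Or.inr h)) (fun r h => hb r (Or.inr h))]
  | .ex ρ C, hu, hb => by
      simp only [Cpt.sem]
      rw [sem_congr C (fun u h => hu u h) (fun r h => hb r (Set.mem_insert_iff.2 (Or.inr h))),
        rsem_congr (hb (roleBase ρ) (Set.mem_insert _ _))]
  | .all ρ C, hu, hb => by
      simp only [Cpt.sem]
      rw [sem_congr C (fun u h => hu u h) (fun r h => hb r (Set.mem_insert_iff.2 (Or.inr h))),
        rsem_congr (hb (roleBase ρ) (Set.mem_insert _ _))]
  | .atLeast n ρ C, hu, hb => by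
      simp only [Cpt.sem]
      rw [sem_congr C (fun u h => hu u h) (fun r h => hb r (Set.mem_insert_iff.2 (Or.inr h))),
        rsem_congr (hb (roleBase ρ) (Set.mem_insert _ _))]
  | .atMost n ρ C, hu, hb => by
      simp only [Cpt.sem]
      rw [sem_congr C (fun u h => hu u h) (fun r h => hb r (Set.mem_insert_iff.2 (Or.inr h))),
        rsem_congr (hb (roleBase ρ) (Set.mem_insert _ _))]

def prUn {W : Type} (SU : Set U) (un : U → Set W) : U → Set W :=
  fun u => if u ∈ SU then un u else ∅

def prBin {W : Type} (SR : Set R) (bin : R → Set (W × W)) : R → Set (W × W) :=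
  fun r => if r ∈ SR then bin r else ∅

lemma pr_sat {W : Type} (O : DLOntL U R) {un : U → Set W} {bin : R → Set (W × W)}
    (h : O.toOnt.Sat un bin) : O.toOnt.Sat (prUn O.sigU un) (prBin O.sigR bin) := by
  constructor
  · intro p hp
    have hp' : p ∈ O.CIs := hp
    have h1 : p.1.sem (prUn O.sigU un) (prBin O.sigR bin) = p.1.sem un bin :=
      sem_congr p.1 (fun u hu => if_pos ⟨p, hp', Or.inl hu⟩)
        (fun r hr => if_pos (Or.inl ⟨p, hp', Or.inl hr⟩))
    have h2 : p.2.sem (prUn O.sigU un) (prBin O.sigR bin) = p.2.sem un bin :=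
      sem_congr p.2 (fun u hu => if_pos ⟨p, hp', Or.inr hu⟩)
        (fun r hr => if_pos (Or.inl ⟨p, hp', Or.inr hr⟩))
    rw [h1, h2]
    exact h.1 p hp
  · intro p hp
    have hp' : p ∈ O.RIs := hp
    have h1 : prBin O.sigR bin (roleBase p.1) = bin (roleBase p.1) :=
      if_pos (Or.inr ⟨p, hp', Or.inl rfl⟩)
    have h2 : prBin O.sigR bin (roleBase p.2) = bin (roleBase p.2) :=
      if_pos (Or.inr ⟨p, hp', Or.inr rfl⟩)
    rw [rsem_congr h1, rsem_congr h2]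
    exact h.2 p hp

/-! ### Homomorphisms transfer CQ answers -/

lemma cq_hom {W W' : Type} {k : ℕ} {un : U → Set W} {bin : R → Set (W × W)}
    {un' : U → Set W'} {bin' : R → Set (W' × W')} {q : DLCQ U R k} {t : Fin k → W}
    (g : W → W')
    (hgu : ∀ u x, x ∈ un u → g x ∈ un' u)
    (hgb : ∀ r (p : W × W), p ∈ bin r → (g p.1, g p.2) ∈ bin' r)
    (h : DLCQAns un bin q t) : DLCQAns un' bin' q (g ∘ t) := by
  obtain ⟨h0, a1, a2, a3⟩ := h
  refine ⟨g ∘ h0, fun u v hv => hgu u _ (a1 u v hv),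
    fun r p hp => hgb r (h0 p.1, h0 p.2) (a2 r p hp), ?_⟩
  rw [← a3]
  rfl

end Aux
section Main

attribute [local instance] Classical.propDecidable

universe u

variable {U R : Type}

structure Mat1 (O : DLOntL U R) {V' : Type} (E : DLInst U R V') (b : V') : Type 1 where
  W : Type
  ι : V' → W
  un : U → Set W
  bin : R → Set (W × W)
  mod : IsDLMod O.toOnt E ι un bin
  lf : ∀ (r : R) (x : W), (x, x) ∉ bin r
  sgU : ∀ u, (un u).Nonempty → u ∈ O.sigU
  sgR : ∀ r, (bin r).Nonempty → r ∈ O.sigR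
  hom : ∀ (W' : Type) (ι' : V' → W') (un' : U → Set W') (bin' : R → Set (W' × W')),
    IsDLMod O.toOnt E ι' un' bin' →
    ∃ g : W → W',
      (∀ u x, x ∈ NbhdM bin (ι b) → x ∈ un u → g x ∈ un' u) ∧
      (∀ r x y, x ∈ NbhdM bin (ι b) → y ∈ NbhdM bin (ι b) →
        (x, y) ∈ bin r → (g x, g y) ∈ bin' r) ∧
      (∀ d ∈ E.dom, g (ι d) = ι' d)

lemma getMat1 {O : DLOntL U R}
    (h1 : ∀ (V : Type) (D : DLInst U R V) (b : V), IsBouquet D b → Irrefl D →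
      SigIn D O → OutdegLE D b O.size → DLConsistent O.toOnt D →
      OneMaterializable O D b)
    {V' : Type} (E : DLInst U R V') (b : V') (hbq : IsBouquet E b) (hir : Irrefl E)
    (hsg : SigIn E O) (hdeg : OutdegLE E b O.size) (hcons : DLConsistent O.toOnt E) :
    Nonempty (Mat1 O E b) := by
  obtain ⟨W, ι, un, bin, hmod, hhom⟩ := h1 V' E b hbq hir hsg hdeg hcons
  have hproj : ∀ x, x ∈ NbhdM (prBin O.sigR (lkBin bin)) (ι b, true) →
      x.1 ∈ NbhdM bin (ι b) := by
    rintro x (hx | ⟨r, hx⟩)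
    · exact Or.inl (congrArg Prod.fst hx)
    · have hx' : ((ι b, true), x) ∈ lkBin bin r ∨ (x, (ι b, true)) ∈ lkBin bin r := by
        unfold prBin at hx
        split at hx
        · exact hx
        · rcases hx with h | h <;> exact absurd h (Set.notMem_empty _)
      rcases hx' with h | h
      · exact Or.inr ⟨r, Or.inl h.1⟩
      · exact Or.inr ⟨r, Or.inr h.1⟩
  refine ⟨⟨W × Bool, fun d => (ι d, true), prUn O.sigU (lkUn un), prBin O.sigR (lkBin bin),
    ?_, ?_, ?_, ?_, ?_⟩⟩
  · obtain ⟨hinj, hu, hb, hsat⟩ := lk_mod hmod hir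
    refine ⟨hinj, ?_, ?_, pr_sat O hsat⟩
    · intro u v hv
      have h : u ∈ O.sigU := hsg.1 u ⟨v, hv⟩
      show (ι v, true) ∈ prUn O.sigU (lkUn un) u
      unfold prUn
      rw [if_pos h]
      exact hu u v hv
    · intro r p hp
      have h : r ∈ O.sigR := hsg.2 r ⟨p, hp⟩
      show _ ∈ prBin O.sigR (lkBin bin) r
      unfold prBin
      rw [if_pos h]
      exact hb r p hp
  · intro r x hx
    have hx' : (x, x) ∈ lkBin bin r := by
      unfold prBin at hx
      split at hx
      · exact hx
      · exact absurd hx (Set.notMem_empty _)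
    exact lk_loopfree bin r x hx'
  · rintro u ⟨x, hx⟩
    unfold prUn at hx
    by_cases h : u ∈ O.sigU
    · exact h
    · rw [if_neg h] at hx
      exact absurd hx (Set.notMem_empty _)
  · rintro r ⟨x, hx⟩
    unfold prBin at hx
    by_cases h : r ∈ O.sigR
    · exact h
    · rw [if_neg h] at hx
      exact absurd hx (Set.notMem_empty _)
  · intro W' ι' un' bin' hmod'
    obtain ⟨g, hg1, hg2, hg3⟩ := hhom W' ι' un' bin' hmod'
    refine ⟨fun p => g p.1, ?_, ?_, fun d hd => hg3 d hd⟩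
    · intro u x hx hxu
      have hxu' : x.1 ∈ un u := by
        unfold prUn at hxu
        split at hxu
        · exact hxu
        · exact absurd hxu (Set.notMem_empty _)
      exact hg1 u x.1 (hproj x hx) hxu'
    · intro r x y hx hy hxy
      have hxy' : (x.1, y.1) ∈ bin r := by
        unfold prBin at hxy
        split at hxy
        · exact hxy.1
        · exact absurd hxy (Set.notMem_empty _)
      exact hg2 r x.1 y.1 (hproj x hx) (hproj y hy) hxy'

structure Setup (U R : Type) : Type 1 where
  O : DLOntL U R
  hdepth : O.depthLE 1
  h1 : ∀ (V : Type) (D : DLInst U R V) (b : V), IsBouquet D b → Irrefl D →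
      SigIn D O → OutdegLE D b O.size → DLConsistent O.toOnt D →
      OneMaterializable O D b
  hsz : 1 ≤ O.size
  V : Type
  D : DLInst U R V
  a : V
  hbq : IsBouquet D a
  hir : Irrefl D
  hsg : SigIn D O
  hdeg : OutdegLE D a O.size
  hcons : DLConsistent O.toOnt D

variable (S : Setup U R)

structure Seed (S : Setup U R) : Type where
  n : ℕ
  hn : 1 ≤ n
  hns : n ≤ S.O.size
  rt : Set U
  nt : Fin n → Set U
  tos : Fin n → Set R
  fros : Fin n → Set R
  hne : ∀ i, (tos i ∪ fros i).Nonempty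
  hrtU : rt ⊆ S.O.sigU
  hntU : ∀ i, nt i ⊆ S.O.sigU
  htoR : ∀ i, tos i ⊆ S.O.sigR
  hfroR : ∀ i, fros i ⊆ S.O.sigR
  good : ∃ (W : Type) (ι : Fin (n + 1) → W) (un : U → Set W) (bin : R → Set (W × W)),
    Function.Injective ι ∧ S.O.toOnt.Sat un bin ∧
    (∀ u, ι 0 ∈ un u ↔ u ∈ rt) ∧
    (∀ u (i : Fin n), ι i.succ ∈ un u ↔ u ∈ nt i) ∧
    (∀ (r : R) (i : Fin n), ((ι 0, ι i.succ) ∈ bin r ↔ r ∈ tos i) ∧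
      ((ι i.succ, ι 0) ∈ bin r ↔ r ∈ fros i))

def sInst (s : Seed S) : DLInst U R (Fin (s.n + 1)) where
  un := fun u => {j | ∃ i : Fin s.n, j = i.succ ∧ u ∈ s.nt i} ∪ {j | j = 0 ∧ u ∈ s.rt}
  bin := fun r =>
    {p | ∃ i : Fin s.n, (p = (0, i.succ) ∧ r ∈ s.tos i) ∨ (p = (i.succ, 0) ∧ r ∈ s.fros i)}

lemma sInst_dom (s : Seed S) : ∀ j, j ∈ (sInst S s).dom := by
  intro j
  induction j using Fin.cases with
  | zero =>
    obtain ⟨r, hr⟩ := s.hne ⟨0, s.hn⟩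
    rcases hr with h | h
    · exact Or.inr ⟨r, (⟨0, s.hn⟩ : Fin s.n).succ, Or.inl ⟨⟨0, s.hn⟩, Or.inl ⟨rfl, h⟩⟩⟩
    · exact Or.inr ⟨r, (⟨0, s.hn⟩ : Fin s.n).succ, Or.inr ⟨⟨0, s.hn⟩, Or.inr ⟨rfl, h⟩⟩⟩
  | succ i =>
    obtain ⟨r, hr⟩ := s.hne i
    rcases hr with h | h
    · exact Or.inr ⟨r, 0, Or.inr ⟨i, Or.inl ⟨rfl, h⟩⟩⟩
    · exact Or.inr ⟨r, 0, Or.inl ⟨i, Or.inr ⟨rfl, h⟩⟩⟩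

lemma sInst_nb (s : Seed S) :
    Nb (sInst S s) 0 = Set.range (Fin.succ : Fin s.n → Fin (s.n + 1)) := by
  ext v
  constructor
  · rintro ⟨hv, r, h | h⟩
    · obtain ⟨i, hi | hi⟩ := h
      · exact ⟨i, (congrArg Prod.snd hi.1).symm⟩
      · exact absurd (congrArg Prod.fst hi.1).symm (Fin.succ_ne_zero i)
    · obtain ⟨i, hi | hi⟩ := h
      · exact absurd (congrArg Prod.snd hi.1).symm (Fin.succ_ne_zero i)
      · exact ⟨i, (congrArg Prod.fst hi.1).symm⟩
  · rintro ⟨i, rfl⟩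
    refine ⟨Fin.succ_ne_zero i, ?_⟩
    obtain ⟨r, hr⟩ := s.hne i
    rcases hr with h | h
    · exact ⟨r, Or.inl ⟨i, Or.inl ⟨rfl, h⟩⟩⟩
    · exact ⟨r, Or.inr ⟨i, Or.inr ⟨rfl, h⟩⟩⟩

lemma sInst_bouquet (s : Seed S) : IsBouquet (sInst S s) 0 := by
  refine ⟨sInst_dom S s 0, fun v _ => ?_⟩
  induction v using Fin.cases with
  | zero => exact Or.inl rfl
  | succ i =>
    right
    rw [sInst_nb]
    exact ⟨i, rfl⟩

lemma sInst_irrefl (s : Seed S) : Irrefl (sInst S s) := by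
  rintro r v ⟨i, h | h⟩
  · have h1 : v = 0 := congrArg Prod.fst h.1
    have h2 : v = i.succ := congrArg Prod.snd h.1
    exact Fin.succ_ne_zero i (h2.symm.trans h1)
  · have h1 : v = i.succ := congrArg Prod.fst h.1
    have h2 : v = 0 := congrArg Prod.snd h.1
    exact Fin.succ_ne_zero i (h1.symm.trans h2)

lemma sInst_sig (s : Seed S) : SigIn (sInst S s) S.O := by
  constructor
  · rintro u ⟨j, hj | hj⟩
    · obtain ⟨i, _, hu⟩ := hj
      exact s.hntU i hu
    · exact s.hrtU hj.2
  · rintro r ⟨p, i, hp | hp⟩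
    · exact s.htoR i hp.2
    · exact s.hfroR i hp.2

lemma sInst_outdeg (s : Seed S) : OutdegLE (sInst S s) 0 S.O.size := by
  rw [OutdegLE, sInst_nb]
  refine ⟨Set.toFinite _, ?_⟩
  have h : (Set.range (Fin.succ : Fin s.n → Fin (s.n + 1))).ncard = s.n := by
    rw [← Nat.card_coe_set_eq, Nat.card_range_of_injective (Fin.succ_injective s.n),
      Nat.card_eq_fintype_card, Fintype.card_fin]
  rw [h]
  exact s.hns

lemma good_mod (s : Seed S) : ∃ (W : Type) (ι : Fin (s.n + 1) → W) (un : U → Set W)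
    (bin : R → Set (W × W)),
    IsDLMod S.O.toOnt (sInst S s) ι un bin ∧
    (∀ u, ι 0 ∈ un u ↔ u ∈ s.rt) ∧
    (∀ u (i : Fin s.n), ι i.succ ∈ un u ↔ u ∈ s.nt i) ∧
    (∀ (r : R) (i : Fin s.n), ((ι 0, ι i.succ) ∈ bin r ↔ r ∈ s.tos i) ∧
      ((ι i.succ, ι 0) ∈ bin r ↔ r ∈ s.fros i)) := by
  obtain ⟨W, ι, un, bin, hinj, hsat, h0, hsucc, hr⟩ := s.good
  refine ⟨W, ι, un, bin, ⟨hinj, ?_, ?_, hsat⟩, h0, hsucc, hr⟩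
  · rintro u v (hv | hv)
    · obtain ⟨i, rfl, hu⟩ := hv
      exact (hsucc u i).2 hu
    · obtain ⟨rfl, hu⟩ := hv
      exact (h0 u).2 hu
  · rintro r p ⟨i, hp | hp⟩
    · have h := (hr r i).1.2 hp.2
      rw [hp.1]
      exact h
    · have h := (hr r i).2.2 hp.2
      rw [hp.1]
      exact h

lemma sInst_cons (s : Seed S) : DLConsistent S.O.toOnt (sInst S s) := by
  obtain ⟨W, ι, un, bin, hmod, _⟩ := good_mod S s
  exact ⟨W, ι, un, bin, hmod⟩

noncomputable def mat1 (s : Seed S) : Mat1 S.O (sInst S s) 0 :=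
  (getMat1 S.h1 (sInst S s) 0 (sInst_bouquet S s) (sInst_irrefl S s) (sInst_sig S s)
    (sInst_outdeg S s) (sInst_cons S s)).some

lemma mat1_nbhd_old (s : Seed S) (i : Fin s.n) :
    (mat1 S s).ι i.succ ∈ NbhdM (mat1 S s).bin ((mat1 S s).ι 0) := by
  obtain ⟨r, hr⟩ := s.hne i
  rcases hr with h | h
  · exact Or.inr ⟨r, Or.inl ((mat1 S s).mod.2.2.1 r (0, i.succ) ⟨i, Or.inl ⟨rfl, h⟩⟩)⟩
  · exact Or.inr ⟨r, Or.inr ((mat1 S s).mod.2.2.1 r (i.succ, 0) ⟨i, Or.inr ⟨rfl, h⟩⟩)⟩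

lemma mat1_exact (s : Seed S) :
    (∀ u, ((mat1 S s).ι 0 ∈ (mat1 S s).un u ↔ u ∈ s.rt)) ∧
    (∀ u (i : Fin s.n), ((mat1 S s).ι i.succ ∈ (mat1 S s).un u ↔ u ∈ s.nt i)) ∧
    (∀ (r : R) (i : Fin s.n),
      (((mat1 S s).ι 0, (mat1 S s).ι i.succ) ∈ (mat1 S s).bin r ↔ r ∈ s.tos i) ∧
      (((mat1 S s).ι i.succ, (mat1 S s).ι 0) ∈ (mat1 S s).bin r ↔ r ∈ s.fros i)) := by
  obtain ⟨W, ι, un, bin, hmod, h0, hsucc, hr⟩ := good_mod S s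
  obtain ⟨g, hg1, hg2, hg3⟩ := (mat1 S s).hom W ι un bin hmod
  have hg : ∀ j, g ((mat1 S s).ι j) = ι j := fun j => hg3 j (sInst_dom S s j)
  have hnb : ∀ j, (mat1 S s).ι j ∈ NbhdM (mat1 S s).bin ((mat1 S s).ι 0) := by
    intro j
    induction j using Fin.cases with
    | zero => exact Or.inl rfl
    | succ i => exact mat1_nbhd_old S s i
  refine ⟨?_, ?_, ?_⟩
  · intro u
    constructor
    · intro h
      have := hg1 u _ (hnb 0) h
      rw [hg 0] at this
      exact (h0 u).1 this
    · intro h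
      exact (mat1 S s).mod.2.1 u 0 (Or.inr ⟨rfl, h⟩)
  · intro u i
    constructor
    · intro h
      have := hg1 u _ (hnb i.succ) h
      rw [hg i.succ] at this
      exact (hsucc u i).1 this
    · intro h
      exact (mat1 S s).mod.2.1 u i.succ (Or.inl ⟨i, rfl, h⟩)
  · intro r i
    constructor
    · constructor
      · intro h
        have := hg2 r _ _ (hnb 0) (hnb i.succ) h
        rw [hg 0, hg i.succ] at this
        exact ((hr r i).1).1 this
      · intro h
        exact (mat1 S s).mod.2.2.1 r (0, i.succ) ⟨i, Or.inl ⟨rfl, h⟩⟩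
    · constructor
      · intro h
        have := hg2 r _ _ (hnb i.succ) (hnb 0) h
        rw [hg 0, hg i.succ] at this
        exact ((hr r i).2).1 this
      · intro h
        exact (mat1 S s).mod.2.2.1 r (i.succ, 0) ⟨i, Or.inr ⟨rfl, h⟩⟩

def ChildT (s : Seed S) : Type :=
  {w : (mat1 S s).W //
    w ∈ NbhdM (mat1 S s).bin ((mat1 S s).ι 0) ∧ w ∉ Set.range (mat1 S s).ι}

noncomputable def childSeed (s : Seed S) (c : ChildT S s) : Seed S where
  n := 1
  hn := le_refl 1
  hns := S.hsz
  rt := {u | c.1 ∈ (mat1 S s).un u}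
  nt := fun _ => {u | (mat1 S s).ι 0 ∈ (mat1 S s).un u}
  tos := fun _ => {r | (c.1, (mat1 S s).ι 0) ∈ (mat1 S s).bin r}
  fros := fun _ => {r | ((mat1 S s).ι 0, c.1) ∈ (mat1 S s).bin r}
  hne := by
    intro _
    obtain ⟨hnb, hnr⟩ := c.2
    rcases hnb with h | ⟨r, h | h⟩
    · exact absurd ⟨0, h.symm⟩ hnr
    · exact ⟨r, Or.inr h⟩
    · exact ⟨r, Or.inl h⟩
  hrtU := fun u hu => (mat1 S s).sgU u ⟨c.1, hu⟩
  hntU := fun _ u hu => (mat1 S s).sgU u ⟨_, hu⟩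
  htoR := fun _ r hr => (mat1 S s).sgR r ⟨_, hr⟩
  hfroR := fun _ r hr => (mat1 S s).sgR r ⟨_, hr⟩
  good := by
    have hc0 : c.1 ≠ (mat1 S s).ι 0 := fun h => c.2.2 ⟨0, h.symm⟩
    refine ⟨(mat1 S s).W, ![c.1, (mat1 S s).ι 0], (mat1 S s).un, (mat1 S s).bin, ?_,
      (mat1 S s).mod.2.2.2, ?_, ?_, ?_⟩
    · intro i j hij
      fin_cases i <;> fin_cases j <;> simp_all
    · intro u
      exact Iff.rfl
    · intro u i
      have hi : i = 0 := Subsingleton.elim i 0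
      subst hi
      show (![c.1, (mat1 S s).ι 0] 1 ∈ _) ↔ _
      rw [show (![c.1, (mat1 S s).ι 0] 1) = (mat1 S s).ι 0 from rfl]
      exact Iff.rfl
    · intro r i
      have hi : i = 0 := Subsingleton.elim i 0
      subst hi
      constructor
      · show ((![c.1, (mat1 S s).ι 0] 0, ![c.1, (mat1 S s).ι 0] 1) ∈ _) ↔ _
        exact Iff.rfl
      · exact Iff.rfl

end Main
noncomputable section Level0

attribute [local instance] Classical.propDecidable

variable {U R : Type} (S : Setup U R)

noncomputable def M0 : Mat1 S.O S.D S.a :=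
  (getMat1 S.h1 S.D S.a S.hbq S.hir S.hsg S.hdeg S.hcons).some

def N0 : Set (M0 S).W := NbhdM (M0 S).bin ((M0 S).ι S.a)

def L0 : Type := ↥(N0 S)

def rt0 : L0 S := ⟨(M0 S).ι S.a, Or.inl rfl⟩

def namedP (w : (M0 S).W) : Prop := w ∈ (M0 S).ι '' S.D.dom

def glue (y z : L0 S) : Set R :=
  if y = rt0 S ∨ z = rt0 S ∨ (namedP S y.1 ∧ namedP S z.1) then
    {r | (y.1, z.1) ∈ (M0 S).bin r} else ∅

lemma glue_sub (y z : L0 S) : glue S y z ⊆ {r | (y.1, z.1) ∈ (M0 S).bin r} := by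
  intro r hr
  unfold glue at hr
  split at hr
  · exact hr
  · exact absurd hr (Set.notMem_empty _)

def NbL (y : L0 S) : Set (L0 S) := {z | z ≠ y ∧ (glue S y z ∪ glue S z y).Nonempty}

lemma named_rt0 : namedP S (rt0 S).1 := ⟨S.a, S.hbq.1, rfl⟩

lemma glue_eq_of_mem {y z : L0 S} (hz : z ∈ NbL S y) :
    glue S y z = {r | (y.1, z.1) ∈ (M0 S).bin r} ∧
    glue S z y = {r | (z.1, y.1) ∈ (M0 S).bin r} := by
  have hcond : y = rt0 S ∨ z = rt0 S ∨ (namedP S y.1 ∧ namedP S z.1) := by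
    by_contra hc
    push_neg at hc
    have h1 : glue S y z = ∅ := if_neg (by tauto)
    have h2 : glue S z y = ∅ := if_neg (by tauto)
    obtain ⟨r, hr⟩ := hz.2
    rw [h1, h2] at hr
    simp at hr
  exact ⟨if_pos hcond, if_pos (by tauto)⟩

lemma mem_NbL_iff {y z : L0 S}
    (hcond : y = rt0 S ∨ z = rt0 S ∨ (namedP S y.1 ∧ namedP S z.1)) :
    z ∈ NbL S y ↔ (z ≠ y ∧ ∃ r, (y.1, z.1) ∈ (M0 S).bin r ∨ (z.1, y.1) ∈ (M0 S).bin r) := by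
  constructor
  · rintro ⟨hne, r, hr⟩
    obtain ⟨h1, h2⟩ := glue_eq_of_mem S ⟨hne, r, hr⟩
    rw [h1, h2] at hr
    rcases hr with h | h
    · exact ⟨hne, r, Or.inl h⟩
    · exact ⟨hne, r, Or.inr h⟩
  · rintro ⟨hne, r, hr⟩
    refine ⟨hne, r, ?_⟩
    have h1 : glue S y z = {r | (y.1, z.1) ∈ (M0 S).bin r} := if_pos hcond
    have h2 : glue S z y = {r | (z.1, y.1) ∈ (M0 S).bin r} := if_pos (by tauto)
    rw [h1, h2]
    rcases hr with h | h
    · exact Or.inl h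
    · exact Or.inr h

def NamedL : Set (L0 S) := {z | namedP S z.1}

lemma domD_eq : S.D.dom = insert S.a (Nb S.D S.a) := by
  apply Set.Subset.antisymm
  · intro v hv
    rcases S.hbq.2 v hv with h | h
    · exact Or.inl h
    · exact Or.inr h
  · intro v hv
    rcases hv with rfl | hv
    · exact S.hbq.1
    · obtain ⟨hne, r, h | h⟩ := hv
      · exact Or.inr ⟨r, S.a, Or.inr h⟩
      · exact Or.inr ⟨r, S.a, Or.inl h⟩

lemma domD_fin : S.D.dom.Finite := by
  rw [domD_eq]
  exact (S.hdeg.1).insert S.a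

lemma namedL_fin : (NamedL S).Finite := by
  have h : NamedL S = Subtype.val ⁻¹' ((M0 S).ι '' S.D.dom) := rfl
  rw [h]
  exact Set.Finite.preimage (Set.injOn_of_injective Subtype.val_injective) ((domD_fin S).image _)

lemma namedL_card : (NamedL S).ncard ≤ S.O.size + 1 := by
  have h1 : (NamedL S).ncard ≤ ((M0 S).ι '' S.D.dom).ncard :=
    Set.ncard_le_ncard_of_injOn Subtype.val (fun z hz => hz)
      (Set.injOn_of_injective Subtype.val_injective) ((domD_fin S).image _)
  have h2 : ((M0 S).ι '' S.D.dom).ncard = S.D.dom.ncard :=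
    Set.ncard_image_of_injective _ (M0 S).mod.1
  have h3 : S.D.dom.ncard ≤ S.O.size + 1 := by
    rw [domD_eq]
    have h4 : S.a ∉ Nb S.D S.a := fun h => h.1 rfl
    rw [Set.ncard_insert_of_notMem h4 S.hdeg.1]
    have h5 := S.hdeg.2
    omega
  omega

lemma NbL_sub {y : L0 S} (hy : y ≠ rt0 S) : NbL S y ⊆ NamedL S \ {y} := by
  rintro z ⟨hne, r, hr⟩
  have hcond : y = rt0 S ∨ z = rt0 S ∨ (namedP S y.1 ∧ namedP S z.1) := by
    by_contra hc
    push_neg at hc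
    have h1 : glue S y z = ∅ := if_neg (by tauto)
    have h2 : glue S z y = ∅ := if_neg (by tauto)
    rw [h1, h2] at hr
    simp at hr
  refine ⟨?_, hne⟩
  rcases hcond with h | h | h
  · exact absurd h hy
  · rw [h]; exact named_rt0 S
  · exact h.2

lemma NbL_fin {y : L0 S} (hy : y ≠ rt0 S) : (NbL S y).Finite :=
  Set.Finite.subset ((namedL_fin S).diff) (NbL_sub S hy)

lemma rt0_mem_NbL {y : L0 S} (hy : y ≠ rt0 S) : rt0 S ∈ NbL S y := by
  have hyv : y.1 ≠ (rt0 S).1 := fun h => hy (Subtype.ext h)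
  have hN : y.1 ∈ N0 S := y.2
  rcases hN with h | ⟨r, h | h⟩
  · exact absurd h hyv
  · refine (mem_NbL_iff S (Or.inr (Or.inl rfl))).2 ⟨Ne.symm hy, r, Or.inr h⟩
  · exact (mem_NbL_iff S (Or.inr (Or.inl rfl))).2 ⟨Ne.symm hy, r, Or.inl h⟩

lemma NbL_card {y : L0 S} (hy : y ≠ rt0 S) : (NbL S y).ncard ≤ S.O.size := by
  by_cases hn : y ∈ NamedL S
  · have h1 : (NbL S y).ncard ≤ (NamedL S \ {y}).ncard :=
      Set.ncard_le_ncard (NbL_sub S hy) ((namedL_fin S).diff)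
    have h2 : (NamedL S \ {y}).ncard = (NamedL S).ncard - 1 :=
      Set.ncard_diff_singleton_of_mem hn
    have h3 := namedL_card S
    have h4 : 0 < (NamedL S).ncard := (Set.ncard_pos (namedL_fin S)).2 ⟨y, hn⟩
    omega
  · have hsub : NbL S y ⊆ {rt0 S} := by
      rintro z ⟨hne, r, hr⟩
      have hcond : y = rt0 S ∨ z = rt0 S ∨ (namedP S y.1 ∧ namedP S z.1) := by
        by_contra hc
        push_neg at hc
        have h1 : glue S y z = ∅ := if_neg (by tauto)
        have h2 : glue S z y = ∅ := if_neg (by tauto)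
        rw [h1, h2] at hr
        simp at hr
      rcases hcond with h | h | h
      · exact absurd h hy
      · exact h
      · exact absurd h.1 hn
    calc (NbL S y).ncard ≤ ({rt0 S} : Set (L0 S)).ncard :=
          Set.ncard_le_ncard hsub (Set.finite_singleton _)
      _ = 1 := Set.ncard_singleton _
      _ ≤ S.O.size := S.hsz

lemma NbL_pos {y : L0 S} (hy : y ≠ rt0 S) : 1 ≤ (NbL S y).ncard :=
  (Set.ncard_pos (NbL_fin S hy)).2 ⟨rt0 S, rt0_mem_NbL S hy⟩

noncomputable def enum {y : L0 S} (hy : y ≠ rt0 S) : Fin ((NbL S y).ncard) ≃ ↥(NbL S y) := by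
  have hfin := NbL_fin S hy
  have hcard : (NbL S y).ncard = hfin.toFinset.card :=
    Set.ncard_eq_toFinset_card _ hfin
  exact (finCongr hcard).trans ((hfin.toFinset.equivFin).symm.trans
    (Equiv.subtypeEquivRight (fun x => hfin.mem_toFinset)))

noncomputable def seed0 (y : L0 S) (hy : y ≠ rt0 S) : Seed S where
  n := (NbL S y).ncard
  hn := NbL_pos S hy
  hns := NbL_card S hy
  rt := {u | y.1 ∈ (M0 S).un u}
  nt := fun i => {u | ((enum S hy i : L0 S)).1 ∈ (M0 S).un u}
  tos := fun i => glue S y (enum S hy i)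
  fros := fun i => glue S (enum S hy i) y
  hne := fun i => (enum S hy i).2.2
  hrtU := fun u hu => (M0 S).sgU u ⟨_, hu⟩
  hntU := fun i u hu => (M0 S).sgU u ⟨_, hu⟩
  htoR := fun i r hr => (M0 S).sgR r ⟨_, glue_sub S _ _ hr⟩
  hfroR := fun i r hr => (M0 S).sgR r ⟨_, glue_sub S _ _ hr⟩
  good := by
    refine ⟨(M0 S).W, Fin.cases y.1 (fun i => ((enum S hy i : L0 S)).1), (M0 S).un, (M0 S).bin,
      ?_, (M0 S).mod.2.2.2, ?_, ?_, ?_⟩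
    · intro i j hij
      induction i using Fin.cases with
      | zero =>
        induction j using Fin.cases with
        | zero => rfl
        | succ j =>
          simp only [Fin.cases_zero, Fin.cases_succ] at hij
          exact absurd (Subtype.ext hij.symm) (enum S hy j).2.1
      | succ i =>
        induction j using Fin.cases with
        | zero =>
          simp only [Fin.cases_zero, Fin.cases_succ] at hij
          exact absurd (Subtype.ext hij) (enum S hy i).2.1
        | succ j =>
          simp only [Fin.cases_succ] at hij
          have h1 : (enum S hy i : L0 S) = (enum S hy j : L0 S) := Subtype.ext hij
          have h2 : i = j := (enum S hy).injective (Subtype.ext h1)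
          rw [h2]
    · intro u
      simp only [Fin.cases_zero]
      exact Iff.rfl
    · intro u i
      simp only [Fin.cases_succ]
      exact Iff.rfl
    · intro r i
      simp only [Fin.cases_zero, Fin.cases_succ]
      obtain ⟨h1, h2⟩ := glue_eq_of_mem S (enum S hy i).2
      constructor
      · rw [h1]; exact Iff.rfl
      · rw [h2]; exact Iff.rfl

end Level0

noncomputable section Paths

attribute [local instance] Classical.propDecidable

variable {U R : Type} (S : Setup U R)

def fin0 (s : Seed S) : Fin s.n := ⟨0, s.hn⟩

def BigW : Type := Σ s : Seed S, ChildT S s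

noncomputable def seedAt : L0 S → List (BigW S) → Option (Seed S)
  | y, [] => if hy : y = rt0 S then none else some (seed0 S y hy)
  | _, b :: _ => some (childSeed S b.1 b.2)

def Valid : L0 S → List (BigW S) → Prop
  | _, [] => True
  | y, b :: l => Valid y l ∧ seedAt S y l = some b.1

def Vtx : Type := {p : L0 S × List (BigW S) // Valid S p.1 p.2}

def WP : Type := Option S.V × Vtx S

noncomputable def unAtRaw : L0 S → List (BigW S) → Set U
  | y, [] => {u | y.1 ∈ (M0 S).un u}
  | _, b :: _ => (childSeed S b.1 b.2).rt

def binRaw (r : R) (p q : L0 S × List (BigW S)) : Prop :=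
  (p.2 = [] ∧ q.2 = [] ∧ r ∈ glue S p.1 q.1) ∨
  (∃ b : BigW S, q = (p.1, b :: p.2) ∧ r ∈ (childSeed S b.1 b.2).fros (fin0 S _)) ∨
  (∃ b : BigW S, p = (q.1, b :: q.2) ∧ r ∈ (childSeed S b.1 b.2).tos (fin0 S _))

def unP : U → Set (WP S) := fun u => {x | u ∈ unAtRaw S x.2.1.1 x.2.1.2}

def binP : R → Set (WP S × WP S) :=
  fun r => {pq | pq.1.1 = pq.2.1 ∧ binRaw S r pq.1.2.1 pq.2.2.1}

lemma mem_N0_of_dom {d : S.V} (hd : d ∈ S.D.dom) : (M0 S).ι d ∈ N0 S := by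
  rcases S.hbq.2 d hd with h | hnb
  · rw [h]; exact Or.inl rfl
  · obtain ⟨hne, r, h | h⟩ := hnb
    · exact Or.inr ⟨r, Or.inl ((M0 S).mod.2.2.1 r (S.a, d) h)⟩
    · exact Or.inr ⟨r, Or.inr ((M0 S).mod.2.2.1 r (d, S.a) h)⟩

noncomputable def ιP : S.V → WP S := fun d =>
  if hd : d ∈ S.D.dom then (none, ⟨(⟨(M0 S).ι d, mem_N0_of_dom S hd⟩, []), trivial⟩)
  else (some d, ⟨(rt0 S, []), trivial⟩)

end Paths
noncomputable section StarProofs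

attribute [local instance] Classical.propDecidable

variable {U R : Type} (S : Setup U R)

def LocalIso (x : WP S) : Prop :=
  ∃ (W' : Type) (un' : U → Set W') (bin' : R → Set (W' × W')) (x' : W'),
    S.O.toOnt.Sat un' bin' ∧
    ∀ C : Cpt U R, C.depth ≤ 1 → (x ∈ C.sem (unP S) (binP S) ↔ x' ∈ C.sem un' bin')

lemma nbhdP_fst {v w : WP S} (h : w ∈ NbhdM (binP S) v) : w.1 = v.1 := by
  rcases h with h | ⟨r, h | h⟩
  · rw [h]
  · exact h.1.symm
  · exact h.1

lemma wp_ext {v w : WP S} (h1 : v.1 = w.1) (h2 : v.2.1 = w.2.1) : v = w :=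
  Prod.ext h1 (Subtype.ext h2)

lemma glue_self_empty (y : L0 S) : ∀ r, r ∉ glue S y y := by
  intro r hr
  exact (M0 S).lf r y.1 (glue_sub S y y hr)

lemma ne_cons_cons {α : Type} (l : List α) (b b' : α) : l ≠ b :: b' :: l := by
  intro h
  have := congrArg List.length h
  simp only [List.length_cons] at this
  omega

lemma binRaw_inv {r : R} {y z : L0 S} {l m : List (BigW S)}
    (hl : Valid S y l) (hm : Valid S z m) (h : binRaw S r (y, l) (z, m)) :
    (l = [] ∧ m = [] ∧ r ∈ glue S y z) ∨
    (∃ (s : Seed S) (c : ChildT S s), z = y ∧ m = ⟨s, c⟩ :: l ∧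
      seedAt S y l = some s ∧ r ∈ (childSeed S s c).fros (fin0 S (childSeed S s c))) ∨
    (∃ (s : Seed S) (c : ChildT S s), z = y ∧ l = ⟨s, c⟩ :: m ∧
      seedAt S y m = some s ∧ r ∈ (childSeed S s c).tos (fin0 S (childSeed S s c))) := by
  rcases h with ⟨h1, h2, h3⟩ | ⟨b, hb, hr⟩ | ⟨b, hb, hr⟩
  · exact Or.inl ⟨h1, h2, h3⟩
  · have hq1 : z = y := congrArg Prod.fst hb
    have hq2 : m = b :: l := congrArg Prod.snd hb
    have hval : Valid S y (b :: l) := by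
      have h' := hm
      rw [hq1, hq2] at h'
      exact h'
    exact Or.inr (Or.inl ⟨b.1, b.2, hq1, hq2, hval.2, hr⟩)
  · have hy1 : y = z := congrArg Prod.fst hb
    have hl2 : l = b :: m := congrArg Prod.snd hb
    have hval : Valid S y (b :: m) := by
      have h' := hl
      rw [hl2] at h'
      exact h'
    exact Or.inr (Or.inr ⟨b.1, b.2, hy1.symm, hl2, hval.2, hr⟩)

lemma binRaw_lvl0 {y z : L0 S} (r : R) : binRaw S r (y, []) (z, []) ↔ r ∈ glue S y z := by
  constructor
  · rintro (⟨_, _, h3⟩ | ⟨b, hb, _⟩ | ⟨b, hb, _⟩)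
    · exact h3
    · exact absurd (congrArg Prod.snd hb) (by simp)
    · exact absurd (congrArg Prod.snd hb) (by simp)
  · intro hr
    exact Or.inl ⟨rfl, rfl, hr⟩

lemma binRaw_child {y : L0 S} {l : List (BigW S)} {s : Seed S} {c : ChildT S s} (r : R) :
    (binRaw S r (y, l) (y, ⟨s, c⟩ :: l) ↔
        r ∈ (childSeed S s c).fros (fin0 S (childSeed S s c))) ∧
    (binRaw S r (y, ⟨s, c⟩ :: l) (y, l) ↔
        r ∈ (childSeed S s c).tos (fin0 S (childSeed S s c))) := by
  constructor
  · constructor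
    · rintro (⟨_, h2, _⟩ | ⟨b, hb, hr⟩ | ⟨b, hb, _⟩)
      · exact absurd h2 (by simp)
      · have h2 : (⟨s, c⟩ : BigW S) :: l = b :: l := congrArg Prod.snd hb
        have h3 : (⟨s, c⟩ : BigW S) = b := (List.cons.injEq _ _ _ _ ▸ h2).1
        rw [← h3] at hr
        exact hr
      · exact absurd (congrArg Prod.snd hb) (ne_cons_cons l b ⟨s, c⟩)
    · intro hr
      exact Or.inr (Or.inl ⟨⟨s, c⟩, rfl, hr⟩)
  · constructor
    · rintro (⟨h1, _, _⟩ | ⟨b, hb, _⟩ | ⟨b, hb, hr⟩)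
      · exact absurd h1 (by simp)
      · exact absurd (congrArg Prod.snd hb) (ne_cons_cons l b ⟨s, c⟩)
      · have h2 : (⟨s, c⟩ : BigW S) :: l = b :: l := congrArg Prod.snd hb
        have h3 : (⟨s, c⟩ : BigW S) = b := (List.cons.injEq _ _ _ _ ▸ h2).1
        rw [← h3] at hr
        exact hr
    · intro hr
      exact Or.inr (Or.inr ⟨⟨s, c⟩, rfl, hr⟩)

/-- Full characterization of neighbours of a vertex in `P`. -/
lemma nbhdP_char (o : Option S.V) (y : L0 S) (l : List (BigW S)) (hv : Valid S y l)
    (w : WP S) :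
    w ∈ NbhdM (binP S) ((o, ⟨(y, l), hv⟩) : WP S) ↔
      (w.1 = o ∧
        (w.2.1 = (y, l) ∨
         (l = [] ∧ ∃ z : L0 S, z ∈ NbL S y ∧ w.2.1 = (z, [])) ∨
         (∃ (b : BigW S) (l' : List (BigW S)), l = b :: l' ∧ w.2.1 = (y, l')) ∨
         (∃ (s : Seed S) (c' : ChildT S s), seedAt S y l = some s ∧
            w.2.1 = (y, ⟨s, c'⟩ :: l)))) := by
  constructor
  · intro h
    refine ⟨nbhdP_fst S h, ?_⟩
    have hqeta : w.2.1 = (w.2.1.1, w.2.1.2) := rfl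
    rcases h with h | ⟨r, h | h⟩
    · left
      exact congrArg (fun q : WP S => q.2.1) h
    · have hraw : binRaw S r (y, l) (w.2.1.1, w.2.1.2) := h.2
      have hvw : Valid S w.2.1.1 w.2.1.2 := w.2.2
      rcases binRaw_inv S hv hvw hraw with ⟨h1, h2, h3⟩ | ⟨s, c, h1, h2, h3, h4⟩ |
          ⟨s, c, h1, h2, h3, h4⟩
      · right; left
        refine ⟨h1, w.2.1.1, ⟨?_, r, Or.inl h3⟩, by rw [hqeta, h2]⟩
        intro he
        rw [he] at h3
        exact glue_self_empty S y r h3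
      · right; right; right
        exact ⟨s, c, h3, by rw [hqeta, h1, h2]⟩
      · right; right; left
        exact ⟨⟨s, c⟩, w.2.1.2, h2, by rw [hqeta, h1]⟩
    · have hraw : binRaw S r (w.2.1.1, w.2.1.2) (y, l) := h.2
      have hvw : Valid S w.2.1.1 w.2.1.2 := w.2.2
      rcases binRaw_inv S hvw hv hraw with ⟨h1, h2, h3⟩ | ⟨s, c, h1, h2, h3, h4⟩ |
          ⟨s, c, h1, h2, h3, h4⟩
      · right; left
        refine ⟨h2, w.2.1.1, ⟨?_, r, Or.inr h3⟩, by rw [hqeta, h1]⟩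
        intro he
        rw [he] at h3
        exact glue_self_empty S y r h3
      · -- x is the child of w : parent clause
        right; right; left
        exact ⟨⟨s, c⟩, w.2.1.2, h2, by rw [hqeta, ← h1]⟩
      · -- w is a child of x
        right; right; right
        exact ⟨s, c, by rw [h1]; exact h3, by rw [hqeta, h2, ← h1]⟩
  · rintro ⟨ho, h | ⟨hl, z, hz, hw⟩ | ⟨b, l', hbl, hw⟩ | ⟨s, c', hs, hw⟩⟩
    · exact Or.inl (wp_ext S ho h)
    · obtain ⟨hne, r, hr | hr⟩ := hz
      · refine Or.inr ⟨r, Or.inl ⟨ho.symm, ?_⟩⟩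
        show binRaw S r (y, l) w.2.1
        rw [hw, hl]
        exact (binRaw_lvl0 S r).2 hr
      · refine Or.inr ⟨r, Or.inr ⟨ho, ?_⟩⟩
        show binRaw S r w.2.1 (y, l)
        rw [hw, hl]
        exact (binRaw_lvl0 S r).2 hr
    · -- w is the parent of x
      have hs : seedAt S y l' = some b.1 := by
        have := hv
        rw [hbl] at this
        exact this.2
      obtain ⟨r, hr | hr⟩ := (childSeed S b.1 b.2).hne (fin0 S (childSeed S b.1 b.2))
      · -- tos : (x, w) : x is the child of w
        refine Or.inr ⟨r, Or.inl ⟨ho.symm, ?_⟩⟩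
        show binRaw S r (y, l) w.2.1
        rw [hw, hbl]
        exact ((binRaw_child S r).2).2 hr
      · refine Or.inr ⟨r, Or.inr ⟨ho, ?_⟩⟩
        show binRaw S r w.2.1 (y, l)
        rw [hw, hbl]
        exact ((binRaw_child S r).1).2 hr
    · -- w is a child of x
      obtain ⟨r, hr | hr⟩ := (childSeed S s c').hne (fin0 S (childSeed S s c'))
      · -- tos : child → parent, i.e. (w, x)
        refine Or.inr ⟨r, Or.inr ⟨ho, ?_⟩⟩
        show binRaw S r w.2.1 (y, l)
        rw [hw]
        exact ((binRaw_child S r).2).2 hr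
      · refine Or.inr ⟨r, Or.inl ⟨ho.symm, ?_⟩⟩
        show binRaw S r (y, l) w.2.1
        rw [hw]
        exact ((binRaw_child S r).1).2 hr

end StarProofs
noncomputable section TreeIso

attribute [local instance] Classical.propDecidable

variable {U R : Type} (S : Setup U R)

lemma list_ne_cons {α : Type} (l : List α) (b : α) : l ≠ b :: l := by
  intro h
  have := congrArg List.length h
  simp only [List.length_cons] at this
  omega

lemma binRaw_irrefl {y : L0 S} {l : List (BigW S)} (hv : Valid S y l) (r : R) :
    ¬ binRaw S r (y, l) (y, l) := by
  intro h
  rcases binRaw_inv S hv hv h with ⟨_, _, h3⟩ | ⟨s, c, _, h2, _, _⟩ | ⟨s, c, _, h2, _, _⟩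
  · exact glue_self_empty S y r h3
  · exact list_ne_cons l ⟨s, c⟩ h2
  · exact list_ne_cons l ⟨s, c⟩ h2

lemma unAtRaw_eq {y : L0 S} {l : List (BigW S)} {s : Seed S}
    (hs : seedAt S y l = some s) : unAtRaw S y l = s.rt := by
  cases l with
  | nil =>
    by_cases hy : y = rt0 S
    · rw [seedAt, dif_pos hy] at hs
      exact absurd hs.symm (Option.some_ne_none s)
    · rw [seedAt, dif_neg hy] at hs
      have h := Option.some.inj hs
      rw [unAtRaw, ← h]
      exact rfl
  | cons b l =>
    have h : childSeed S b.1 b.2 = s := Option.some.inj hs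
    rw [unAtRaw, ← h]

lemma sigma_snd_inj {s : Seed S} {c c' : ChildT S s}
    (h : (⟨s, c⟩ : BigW S) = ⟨s, c'⟩) : c = c' := by
  have h2 := (Sigma.mk.inj_iff.1 h).2
  exact eq_of_heq h2

lemma fin_eq_fin0 {s : Seed S} {c : ChildT S s} (i : Fin (childSeed S s c).n) :
    i = fin0 S (childSeed S s c) := by
  have h : i.1 < 1 := i.isLt
  exact Fin.ext (by show i.1 = 0; omega)

lemma localIso_tree (o : Option S.V) (y : L0 S) (b : BigW S) (l : List (BigW S))
    (hv : Valid S y (b :: l)) : LocalIso S (o, ⟨(y, b :: l), hv⟩) := by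
  classical
  set sv := childSeed S b.1 b.2 with hsv
  set B := mat1 S sv with hB
  refine ⟨B.W, B.un, B.bin, B.ι 0, B.mod.2.2.2, ?_⟩
  have hseed : seedAt S y (b :: l) = some sv := rfl
  have hpar : seedAt S y l = some b.1 := hv.2
  set x : WP S := (o, ⟨(y, b :: l), hv⟩) with hxdef
  set pv : WP S := (o, ⟨(y, l), hv.1⟩) with hpvdef
  set cv : ChildT S sv → WP S :=
    fun c' => (o, ⟨(y, ⟨sv, c'⟩ :: b :: l), ⟨hv, hseed⟩⟩) with hcvdef
  set φ : WP S → B.W := fun w =>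
    if w.2.1 = (y, l) then B.ι (fin0 S sv).succ
    else if h : ∃ c' : ChildT S sv, w.2.1 = (y, ⟨sv, c'⟩ :: b :: l) then h.choose.1
    else B.ι 0
    with hφdef
  have hφx : φ x = B.ι 0 := by
    rw [hφdef]
    simp only
    rw [if_neg, dif_neg]
    · rintro ⟨c', hc⟩
      have h2 := (List.cons.inj (congrArg Prod.snd hc)).2
      exact list_ne_cons l b h2
    · intro h
      exact list_ne_cons l b (congrArg Prod.snd h).symm
  have hφp : φ pv = B.ι (fin0 S sv).succ := by
    rw [hφdef]
    simp only
    exact if_pos rfl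
  have hφc : ∀ c' : ChildT S sv, φ (cv c') = c'.1 := by
    intro c'
    have hex : ∃ c'' : ChildT S sv, (cv c').2.1 = (y, ⟨sv, c''⟩ :: b :: l) := ⟨c', rfl⟩
    rw [hφdef]
    simp only
    rw [if_neg, dif_pos hex]
    · have hspec := hex.choose_spec
      have h2 : (⟨sv, c'⟩ : BigW S) = ⟨sv, hex.choose⟩ :=
        (List.cons.inj (congrArg Prod.snd hspec)).1
      rw [← sigma_snd_inj S h2]
    · intro h
      have h2 := congrArg Prod.snd h
      have h3 : (⟨sv, c'⟩ :: b :: l : List (BigW S)) = l := h2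
      have : l.length + 1 + 1 = l.length := congrArg List.length h3
      omega
  -- shape of neighbours
  have hchar := nbhdP_char S o y (b :: l) hv
  have hshape : ∀ w, w ∈ NbhdM (binP S) x →
      w = x ∨ w = pv ∨ ∃ c' : ChildT S sv, w = cv c' := by
    intro w hw
    obtain ⟨ho, hs⟩ := (hchar w).1 hw
    rcases hs with h1 | ⟨h1e, _⟩ | ⟨b1, l1, hb1, h1⟩ | ⟨s1, c1, hs1, h1⟩
    · exact Or.inl (wp_ext S ho h1)
    · exact absurd h1e (by simp)
    · right; left
      have h2 := (List.cons.inj hb1).2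
      apply wp_ext S ho
      rw [h1, ← h2]
    · right; right
      rw [hseed] at hs1
      have h2 : s1 = sv := Option.some.inj hs1.symm
      subst h2
      exact ⟨c1, wp_ext S ho h1⟩
  have hpvnb : pv ∈ NbhdM (binP S) x := by
    apply (hchar pv).2
    exact ⟨rfl, Or.inr (Or.inr (Or.inl ⟨b, l, rfl, rfl⟩))⟩
  have hcvnb : ∀ c' : ChildT S sv, cv c' ∈ NbhdM (binP S) x := by
    intro c'
    apply (hchar (cv c')).2
    exact ⟨rfl, Or.inr (Or.inr (Or.inr ⟨sv, c', hseed, rfl⟩))⟩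
  -- distinctness in B
  have hd1 : B.ι 0 ≠ B.ι (fin0 S sv).succ := by
    intro h
    exact Fin.succ_ne_zero _ (B.mod.1 h).symm
  -- edge facts in B
  have hto : ∀ r, ((B.ι 0, B.ι (fin0 S sv).succ) ∈ B.bin r ↔ r ∈ sv.tos (fin0 S sv)) :=
    fun r => ((mat1_exact S sv).2.2 r (fin0 S sv)).1
  have hfro : ∀ r, ((B.ι (fin0 S sv).succ, B.ι 0) ∈ B.bin r ↔ r ∈ sv.fros (fin0 S sv)) :=
    fun r => ((mat1_exact S sv).2.2 r (fin0 S sv)).2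
  intro C hC
  refine star_transfer (φ := φ) hφx ?_ ?_ ?_ ?_ ?_ C hC
  · -- injectivity
    intro w1 hw1 w2 hw2 heq
    rcases hshape w1 hw1 with rfl | rfl | ⟨c1, rfl⟩ <;>
      rcases hshape w2 hw2 with rfl | rfl | ⟨c2, rfl⟩
    · rfl
    · rw [hφx, hφp] at heq; exact absurd heq hd1
    · rw [hφx, hφc] at heq; exact absurd ⟨0, heq⟩ c2.2.2
    · rw [hφx, hφp] at heq; exact absurd heq.symm hd1
    · rfl
    · rw [hφp, hφc] at heq; exact absurd ⟨(fin0 S sv).succ, heq⟩ c2.2.2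
    · rw [hφx, hφc] at heq; exact absurd ⟨0, heq.symm⟩ c1.2.2
    · rw [hφp, hφc] at heq; exact absurd ⟨(fin0 S sv).succ, heq.symm⟩ c1.2.2
    · rw [hφc, hφc] at heq
      rw [show c1 = c2 from Subtype.ext heq]
  · -- surjectivity onto the neighbourhood in B
    intro w' hw'
    by_cases hrange : w' ∈ Set.range B.ι
    · obtain ⟨j, rfl⟩ := hrange
      rcases Fin.eq_zero_or_eq_succ j with rfl | ⟨i, rfl⟩
      · exact ⟨x, mem_nbhd_self _ _, hφx⟩
      · have hi : i = fin0 S sv := fin_eq_fin0 S i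
        subst hi
        exact ⟨pv, hpvnb, hφp⟩
    · have hc' : (⟨w', hw', hrange⟩ : ChildT S sv) = ⟨w', hw', hrange⟩ := rfl
      exact ⟨cv ⟨w', hw', hrange⟩, hcvnb _, hφc _⟩
  · -- unary predicates
    intro u w hw
    rcases hshape w hw with rfl | rfl | ⟨c', rfl⟩
    · show u ∈ unAtRaw S y (b :: l) ↔ φ x ∈ B.un u
      rw [hφx, unAtRaw_eq S hseed]
      exact ((mat1_exact S sv).1 u).symm
    · show u ∈ unAtRaw S y l ↔ φ pv ∈ B.un u
      rw [hφp, unAtRaw_eq S hpar]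
      have h1 := (mat1_exact S (b.1)).1 u
      have h2 := (mat1_exact S sv).2.1 u (fin0 S sv)
      exact (h1.symm).trans h2.symm
    · show u ∈ unAtRaw S y (⟨sv, c'⟩ :: b :: l) ↔ φ (cv c') ∈ B.un u
      rw [hφc]
      exact Iff.rfl
  · -- role edges from x
    intro r w hw
    rcases hshape w hw with rfl | rfl | ⟨c', rfl⟩
    · constructor
      · intro h
        exact absurd h.2 (binRaw_irrefl S hv r)
      · intro h
        rw [hφx] at h
        exact absurd h (B.lf r _)
    · constructor
      · intro h
        rw [hφp]
        exact (hto r).2 (((binRaw_child S r).2).1 h.2)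
      · intro h
        rw [hφp] at h
        exact ⟨rfl, ((binRaw_child S r).2).2 ((hto r).1 h)⟩
    · constructor
      · intro h
        rw [hφc]
        exact ((binRaw_child S r).1).1 h.2
      · intro h
        rw [hφc] at h
        exact ⟨rfl, ((binRaw_child S r).1).2 h⟩
  · -- role edges into x
    intro r w hw
    rcases hshape w hw with rfl | rfl | ⟨c', rfl⟩
    · constructor
      · intro h
        exact absurd h.2 (binRaw_irrefl S hv r)
      · intro h
        rw [hφx] at h
        exact absurd h (B.lf r _)
    · constructor
      · intro h
        rw [hφp]
        exact (hfro r).2 (((binRaw_child S r).1).1 h.2)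
      · intro h
        rw [hφp] at h
        exact ⟨rfl, ((binRaw_child S r).1).2 ((hfro r).1 h)⟩
    · constructor
      · intro h
        rw [hφc]
        exact ((binRaw_child S r).2).1 h.2
      · intro h
        rw [hφc] at h
        exact ⟨rfl, ((binRaw_child S r).2).2 h⟩

end TreeIso
noncomputable section Lvl0Iso

attribute [local instance] Classical.propDecidable

variable {U R : Type} (S : Setup U R)

lemma localIso_root (o : Option S.V) (hv : Valid S (rt0 S) []) :
    LocalIso S (o, ⟨(rt0 S, []), hv⟩) := by
  classical
  refine ⟨(M0 S).W, (M0 S).un, (M0 S).bin, (rt0 S).1, (M0 S).mod.2.2.2, ?_⟩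
  set x : WP S := (o, ⟨(rt0 S, []), hv⟩) with hxdef
  set φ : WP S → (M0 S).W := fun w =>
    if h : ∃ z : L0 S, w.2.1 = (z, ([] : List (BigW S))) then h.choose.1 else (rt0 S).1
    with hφdef
  have hφz : ∀ (w : WP S) (z : L0 S), w.2.1 = (z, []) → φ w = z.1 := by
    intro w z hw
    have hex : ∃ z' : L0 S, w.2.1 = (z', []) := ⟨z, hw⟩
    rw [hφdef]
    simp only
    rw [dif_pos hex]
    have h2 := hw.symm.trans hex.choose_spec
    exact congrArg Subtype.val (congrArg Prod.fst h2).symm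
  have hφx : φ x = (rt0 S).1 := hφz x (rt0 S) rfl
  have hchar := nbhdP_char S o (rt0 S) [] hv
  have hshape : ∀ w, w ∈ NbhdM (binP S) x →
      w.1 = o ∧ ∃ z : L0 S, w.2.1 = (z, []) ∧ (z = rt0 S ∨ z ∈ NbL S (rt0 S)) := by
    intro w hw
    obtain ⟨ho, hs⟩ := (hchar w).1 hw
    refine ⟨ho, ?_⟩
    rcases hs with h1 | ⟨_, z, hz, hw'⟩ | ⟨b1, l1, hb1, _⟩ | ⟨s1, c1, hs1, _⟩
    · exact ⟨rt0 S, h1, Or.inl rfl⟩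
    · exact ⟨z, hw', Or.inr hz⟩
    · exact absurd hb1 (by simp)
    · rw [seedAt, dif_pos rfl] at hs1
      exact absurd hs1 (by simp)
  intro C hC
  refine star_transfer (φ := φ) hφx ?_ ?_ ?_ ?_ ?_ C hC
  · intro w1 hw1 w2 hw2 heq
    obtain ⟨ho1, z1, hz1, _⟩ := hshape w1 hw1
    obtain ⟨ho2, z2, hz2, _⟩ := hshape w2 hw2
    rw [hφz w1 z1 hz1, hφz w2 z2 hz2] at heq
    apply wp_ext S (ho1.trans ho2.symm)
    rw [hz1, hz2, Subtype.ext heq]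
  · intro w' hw'
    have hw'N : w' ∈ N0 S := hw'
    refine ⟨(o, ⟨((⟨w', hw'N⟩ : L0 S), ([] : List (BigW S))), trivial⟩), ?_,
      hφz _ ⟨w', hw'N⟩ rfl⟩
    by_cases hzr : (⟨w', hw'N⟩ : L0 S) = rt0 S
    · apply (hchar _).2
      refine ⟨rfl, Or.inl ?_⟩
      rw [hzr]
    · apply (hchar _).2
      refine ⟨rfl, Or.inr (Or.inl ⟨rfl, ⟨w', hw'N⟩, ?_, rfl⟩)⟩
      have hzne : w' ≠ (rt0 S).1 := fun h => hzr (Subtype.ext h)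
      rcases hw'N with h | ⟨r, h | h⟩
      · exact absurd h hzne
      · exact (mem_NbL_iff S (Or.inl rfl)).2 ⟨hzr, r, Or.inl h⟩
      · exact (mem_NbL_iff S (Or.inl rfl)).2 ⟨hzr, r, Or.inr h⟩
  · intro u w hw
    obtain ⟨ho, z, hz, _⟩ := hshape w hw
    rw [hφz w z hz]
    show u ∈ unAtRaw S w.2.1.1 w.2.1.2 ↔ z.1 ∈ (M0 S).un u
    rw [show w.2.1.1 = z from congrArg Prod.fst hz, show w.2.1.2 = [] from congrArg Prod.snd hz]
    exact Iff.rfl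
  · intro r w hw
    obtain ⟨ho, z, hz, _⟩ := hshape w hw
    rw [hφz w z hz]
    constructor
    · intro h
      have hraw : binRaw S r (rt0 S, []) (z, []) := by
        have h2 := h.2
        rw [hz] at h2
        exact h2
      exact glue_sub S _ _ ((binRaw_lvl0 S r).1 hraw)
    · intro h
      refine ⟨ho.symm, ?_⟩
      show binRaw S r (rt0 S, []) w.2.1
      rw [hz]
      exact (binRaw_lvl0 S r).2 (by rw [glue, if_pos (Or.inl rfl)]; exact h)
  · intro r w hw
    obtain ⟨ho, z, hz, _⟩ := hshape w hw
    rw [hφz w z hz]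
    constructor
    · intro h
      have hraw : binRaw S r (z, []) (rt0 S, []) := by
        have h2 := h.2
        rw [hz] at h2
        exact h2
      exact glue_sub S _ _ ((binRaw_lvl0 S r).1 hraw)
    · intro h
      refine ⟨ho, ?_⟩
      show binRaw S r w.2.1 (rt0 S, [])
      rw [hz]
      exact (binRaw_lvl0 S r).2 (by rw [glue, if_pos (Or.inr (Or.inl rfl))]; exact h)

lemma localIso_lvl0 (o : Option S.V) (y : L0 S) (hy : ¬ y = rt0 S) (hv : Valid S y []) :
    LocalIso S (o, ⟨(y, []), hv⟩) := by
  classical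
  set sv := seed0 S y hy with hsv
  set B := mat1 S sv with hB
  refine ⟨B.W, B.un, B.bin, B.ι 0, B.mod.2.2.2, ?_⟩
  have hseed : seedAt S y [] = some sv := by rw [seedAt, dif_neg hy]
  set x : WP S := (o, ⟨(y, []), hv⟩) with hxdef
  set zv : ↥(NbL S y) → WP S := fun z => (o, ⟨(z.1, []), trivial⟩) with hzvdef
  set cv : ChildT S sv → WP S :=
    fun c' => (o, ⟨(y, ⟨sv, c'⟩ :: []), ⟨trivial, hseed⟩⟩) with hcvdef
  set φ : WP S → B.W := fun w =>
    if w.2.1 = (y, ([] : List (BigW S))) then B.ι 0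
    else if h : ∃ z : ↥(NbL S y), w.2.1 = (z.1, []) then
      B.ι ((enum S hy).symm h.choose).succ
    else if h : ∃ c' : ChildT S sv, w.2.1 = (y, ⟨sv, c'⟩ :: []) then h.choose.1
    else B.ι 0
    with hφdef
  have hφx : φ x = B.ι 0 := by
    rw [hφdef]
    simp only
    exact if_pos rfl
  have hφz : ∀ z : ↥(NbL S y), φ (zv z) = B.ι ((enum S hy).symm z).succ := by
    intro z
    have hex : ∃ z' : ↥(NbL S y), (zv z).2.1 = (z'.1, []) := ⟨z, rfl⟩
    rw [hφdef]
    simp only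
    rw [if_neg, dif_pos hex]
    · have hspec := hex.choose_spec
      have h1 : z.1 = hex.choose.1 := congrArg Prod.fst hspec
      have h2 : z = hex.choose := Subtype.ext h1
      rw [← h2]
    · intro h
      exact z.2.1 (congrArg Prod.fst h)
  have hφc : ∀ c' : ChildT S sv, φ (cv c') = c'.1 := by
    intro c'
    have hex : ∃ c'' : ChildT S sv, (cv c').2.1 = (y, ⟨sv, c''⟩ :: []) := ⟨c', rfl⟩
    rw [hφdef]
    simp only
    rw [if_neg, dif_neg, dif_pos hex]
    · have hspec := hex.choose_spec
      have h2 : (⟨sv, c'⟩ : BigW S) = ⟨sv, hex.choose⟩ :=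
        (List.cons.inj (congrArg Prod.snd hspec)).1
      rw [← sigma_snd_inj S h2]
    · rintro ⟨z, hz⟩
      exact List.cons_ne_nil _ _ (congrArg Prod.snd hz)
    · intro h
      exact List.cons_ne_nil _ _ (congrArg Prod.snd h)
  have hchar := nbhdP_char S o y [] hv
  have hshape : ∀ w, w ∈ NbhdM (binP S) x →
      w = x ∨ (∃ z : ↥(NbL S y), w = zv z) ∨ ∃ c' : ChildT S sv, w = cv c' := by
    intro w hw
    obtain ⟨ho, hs⟩ := (hchar w).1 hw
    rcases hs with h1 | ⟨_, z, hz, hw'⟩ | ⟨b1, l1, hb1, _⟩ | ⟨s1, c1, hs1, h1⟩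
    · exact Or.inl (wp_ext S ho h1)
    · exact Or.inr (Or.inl ⟨⟨z, hz⟩, wp_ext S ho hw'⟩)
    · exact absurd hb1 (by simp)
    · right; right
      rw [hseed] at hs1
      have h2 : s1 = sv := Option.some.inj hs1.symm
      subst h2
      exact ⟨c1, wp_ext S ho h1⟩
  have hzvnb : ∀ z : ↥(NbL S y), zv z ∈ NbhdM (binP S) x := by
    intro z
    apply (hchar _).2
    exact ⟨rfl, Or.inr (Or.inl ⟨rfl, z.1, z.2, rfl⟩)⟩
  have hcvnb : ∀ c' : ChildT S sv, cv c' ∈ NbhdM (binP S) x := by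
    intro c'
    apply (hchar _).2
    exact ⟨rfl, Or.inr (Or.inr (Or.inr ⟨sv, c', hseed, rfl⟩))⟩
  have henum : ∀ z : ↥(NbL S y), enum S hy ((enum S hy).symm z) = z :=
    fun z => (enum S hy).apply_symm_apply z
  -- seed0 field facts transported along henum
  have hnt : ∀ z : ↥(NbL S y), sv.nt ((enum S hy).symm z) = {u | z.1.1 ∈ (M0 S).un u} := by
    intro z
    show {u | ((enum S hy ((enum S hy).symm z) : L0 S)).1 ∈ (M0 S).un u} = _
    rw [henum z]
  have htos : ∀ z : ↥(NbL S y), sv.tos ((enum S hy).symm z) = glue S y z.1 := by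
    intro z
    show glue S y (enum S hy ((enum S hy).symm z) : L0 S) = _
    rw [henum z]
  have hfros : ∀ z : ↥(NbL S y), sv.fros ((enum S hy).symm z) = glue S z.1 y := by
    intro z
    show glue S (enum S hy ((enum S hy).symm z) : L0 S) y = _
    rw [henum z]
  have hd1 : ∀ i : Fin sv.n, B.ι 0 ≠ B.ι i.succ := by
    intro i h
    exact Fin.succ_ne_zero _ (B.mod.1 h).symm
  intro C hC
  refine star_transfer (φ := φ) hφx ?_ ?_ ?_ ?_ ?_ C hC
  · intro w1 hw1 w2 hw2 heq
    rcases hshape w1 hw1 with rfl | ⟨z1, rfl⟩ | ⟨c1, rfl⟩ <;>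
      rcases hshape w2 hw2 with rfl | ⟨z2, rfl⟩ | ⟨c2, rfl⟩
    · rfl
    · rw [hφx, hφz] at heq; exact absurd heq (hd1 _)
    · rw [hφx, hφc] at heq; exact absurd ⟨0, heq⟩ c2.2.2
    · rw [hφx, hφz] at heq; exact absurd heq.symm (hd1 _)
    · rw [hφz, hφz] at heq
      have h1 := Fin.succ_injective _ (B.mod.1 heq)
      have h2 : z1 = z2 := (enum S hy).symm.injective h1
      rw [h2]
    · rw [hφz, hφc] at heq; exact absurd ⟨_, heq⟩ c2.2.2
    · rw [hφx, hφc] at heq; exact absurd ⟨0, heq.symm⟩ c1.2.2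
    · rw [hφz, hφc] at heq; exact absurd ⟨_, heq.symm⟩ c1.2.2
    · rw [hφc, hφc] at heq
      rw [show c1 = c2 from Subtype.ext heq]
  · intro w' hw'
    by_cases hrange : w' ∈ Set.range B.ι
    · obtain ⟨j, rfl⟩ := hrange
      rcases Fin.eq_zero_or_eq_succ j with rfl | ⟨i, rfl⟩
      · exact ⟨x, mem_nbhd_self _ _, hφx⟩
      · refine ⟨zv (enum S hy i), hzvnb _, ?_⟩
        rw [hφz]
        rw [(enum S hy).symm_apply_apply i]
        rfl
    · exact ⟨cv ⟨w', hw', hrange⟩, hcvnb _, hφc _⟩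
  · intro u w hw
    rcases hshape w hw with rfl | ⟨z, rfl⟩ | ⟨c', rfl⟩
    · show u ∈ unAtRaw S y [] ↔ φ x ∈ B.un u
      rw [hφx]
      exact ((mat1_exact S sv).1 u).symm
    · show u ∈ unAtRaw S z.1 [] ↔ φ (zv z) ∈ B.un u
      rw [hφz]
      have h1 := (mat1_exact S sv).2.1 u ((enum S hy).symm z)
      rw [hnt z] at h1
      exact h1.symm
    · show u ∈ unAtRaw S y (⟨sv, c'⟩ :: []) ↔ φ (cv c') ∈ B.un u
      rw [hφc]
      exact Iff.rfl
  · intro r w hw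
    rcases hshape w hw with rfl | ⟨z, rfl⟩ | ⟨c', rfl⟩
    · constructor
      · intro h
        exact absurd h.2 (binRaw_irrefl S hv r)
      · intro h
        rw [hφx] at h
        exact absurd h (B.lf r _)
    · constructor
      · intro h
        rw [hφz]
        have h2 : r ∈ glue S y z.1 := (binRaw_lvl0 S r).1 h.2
        rw [← htos z] at h2
        exact (((mat1_exact S sv).2.2 r _).1).2 h2
      · intro h
        rw [hφz] at h
        have h2 := (((mat1_exact S sv).2.2 r _).1).1 h
        rw [htos z] at h2
        exact ⟨rfl, (binRaw_lvl0 S r).2 h2⟩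
    · constructor
      · intro h
        rw [hφc]
        exact ((binRaw_child S r).1).1 h.2
      · intro h
        rw [hφc] at h
        exact ⟨rfl, ((binRaw_child S r).1).2 h⟩
  · intro r w hw
    rcases hshape w hw with rfl | ⟨z, rfl⟩ | ⟨c', rfl⟩
    · constructor
      · intro h
        exact absurd h.2 (binRaw_irrefl S hv r)
      · intro h
        rw [hφx] at h
        exact absurd h (B.lf r _)
    · constructor
      · intro h
        rw [hφz]
        have h2 : r ∈ glue S z.1 y := (binRaw_lvl0 S r).1 h.2
        rw [← hfros z] at h2
        exact (((mat1_exact S sv).2.2 r _).2).2 h2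
      · intro h
        rw [hφz] at h
        have h2 := (((mat1_exact S sv).2.2 r _).2).1 h
        rw [hfros z] at h2
        exact ⟨rfl, (binRaw_lvl0 S r).2 h2⟩
    · constructor
      · intro h
        rw [hφc]
        exact ((binRaw_child S r).2).1 h.2
      · intro h
        rw [hφc] at h
        exact ⟨rfl, ((binRaw_child S r).2).2 h⟩

lemma localIso_all (x : WP S) : LocalIso S x := by
  obtain ⟨o, ⟨⟨y, l⟩, hv⟩⟩ := x
  cases l with
  | nil =>
    by_cases hy : y = rt0 S
    · subst hy
      exact localIso_root S o hv
    · exact localIso_lvl0 S o y hy hv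
  | cons b l => exact localIso_tree S o y b l hv

end Lvl0Iso
noncomputable section SatP

attribute [local instance] Classical.propDecidable

variable {U R : Type} (S : Setup U R)

def PairMod (q1 q2 : L0 S × List (BigW S)) : Prop :=
  ∃ (W' : Type) (un' : U → Set W') (bin' : R → Set (W' × W')) (α β : W'),
    S.O.toOnt.Sat un' bin' ∧ (∀ r, binRaw S r q1 q2 ↔ (α, β) ∈ bin' r) ∧
    (∀ r, binRaw S r q2 q1 ↔ (β, α) ∈ bin' r)

lemma pairmod_symm {q1 q2 : L0 S × List (BigW S)} (h : PairMod S q1 q2) :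
    PairMod S q2 q1 := by
  obtain ⟨W', un', bin', α, β, hsat, hvw, hwv⟩ := h
  exact ⟨W', un', bin', β, α, hsat, hwv, hvw⟩

lemma shape_pairmod {r0 : R} {y z : L0 S} {l m : List (BigW S)}
    (h1 : Valid S y l) (h2 : Valid S z m) (h : binRaw S r0 (y, l) (z, m)) :
    PairMod S (y, l) (z, m) := by
  rcases binRaw_inv S h1 h2 h with ⟨hl, hm, h3⟩ | ⟨s, c, hzy, hm, hs, h4⟩ |
      ⟨s, c, hzy, hl, hs, h4⟩
  · subst hl; subst hm
    have hzne : z ∈ NbL S y := by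
      refine ⟨?_, r0, Or.inl h3⟩
      intro he
      rw [he] at h3
      exact glue_self_empty S y r0 h3
    obtain ⟨hg1, hg2⟩ := glue_eq_of_mem S hzne
    refine ⟨(M0 S).W, (M0 S).un, (M0 S).bin, y.1, z.1, (M0 S).mod.2.2.2, ?_, ?_⟩
    · intro r
      rw [binRaw_lvl0, hg1]
      exact Iff.rfl
    · intro r
      rw [binRaw_lvl0, hg2]
      exact Iff.rfl
  · subst hzy; subst hm
    refine ⟨(mat1 S s).W, (mat1 S s).un, (mat1 S s).bin, (mat1 S s).ι 0, c.1,
      (mat1 S s).mod.2.2.2, ?_, ?_⟩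
    · intro r
      exact (binRaw_child S r).1
    · intro r
      exact (binRaw_child S r).2
  · subst hzy; subst hl
    refine ⟨(mat1 S s).W, (mat1 S s).un, (mat1 S s).bin, c.1, (mat1 S s).ι 0,
      (mat1 S s).mod.2.2.2, ?_, ?_⟩
    · intro r
      exact (binRaw_child S r).2
    · intro r
      exact (binRaw_child S r).1

lemma pair_trans {v w : WP S} (hfst : v.1 = w.1) (hpm : PairMod S v.2.1 w.2.1) :
    ∀ p ∈ S.O.toOnt.RIs, (v, w) ∈ rsem (binP S) p.1 → (v, w) ∈ rsem (binP S) p.2 := by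
  obtain ⟨W', un', bin', α, β, hsat, hvw, hwv⟩ := hpm
  rintro ⟨ρ1, ρ2⟩ hp h
  have hsub := hsat.2 _ hp
  have hαβ : (α, β) ∈ rsem bin' ρ1 := by
    cases ρ1 with
    | inl r => exact (hvw r).1 h.2
    | inr r => exact (hwv r).1 h.2
  have h2 := hsub hαβ
  cases ρ2 with
  | inl r => exact ⟨hfst, (hvw r).2 h2⟩
  | inr r => exact ⟨hfst.symm, (hwv r).2 h2⟩

lemma satP : S.O.toOnt.Sat (unP S) (binP S) := by
  constructor
  · intro p hp xx hx
    obtain ⟨W', un', bin', x', hsat, hiff⟩ := localIso_all S xx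
    have hd := S.hdepth p hp
    exact (hiff p.2 hd.2).2 (hsat.1 p hp ((hiff p.1 hd.1).1 hx))
  · rintro p hp ⟨v, w⟩ h
    have hfst : v.1 = w.1 := by
      rcases hp1 : p.1 with r | r
      · rw [hp1] at h
        exact h.1
      · rw [hp1] at h
        exact h.1.symm
    have hpm : PairMod S v.2.1 w.2.1 := by
      rcases hp1 : p.1 with r | r
      · rw [hp1] at h
        have hraw : binRaw S r (v.2.1.1, v.2.1.2) (w.2.1.1, w.2.1.2) := h.2
        exact shape_pairmod S v.2.2 w.2.2 hraw
      · rw [hp1] at h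
        have hraw : binRaw S r (w.2.1.1, w.2.1.2) (v.2.1.1, v.2.1.2) := h.2
        exact pairmod_symm S (shape_pairmod S w.2.2 v.2.2 hraw)
    exact pair_trans S hfst hpm p hp h

lemma ιP_pos {d : S.V} (hd : d ∈ S.D.dom) :
    ιP S d = (none, ⟨(⟨(M0 S).ι d, mem_N0_of_dom S hd⟩, []), trivial⟩) := dif_pos hd

lemma ιP_neg {d : S.V} (hd : d ∉ S.D.dom) :
    ιP S d = (some d, ⟨(rt0 S, []), trivial⟩) := dif_neg hd

lemma modP : IsDLMod S.O.toOnt S.D (ιP S) (unP S) (binP S) := by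
  refine ⟨?_, ?_, ?_, satP S⟩
  · intro d e h
    by_cases hd : d ∈ S.D.dom <;> by_cases he : e ∈ S.D.dom
    · rw [ιP_pos S hd, ιP_pos S he] at h
      have h2 := congrArg (fun q : WP S => q.2.1.1.1) h
      exact (M0 S).mod.1 h2
    · rw [ιP_pos S hd, ιP_neg S he] at h
      exact (Option.some_ne_none _ (congrArg Prod.fst h).symm).elim
    · rw [ιP_neg S hd, ιP_pos S he] at h
      exact (Option.some_ne_none _ (congrArg Prod.fst h)).elim
    · rw [ιP_neg S hd, ιP_neg S he] at h
      exact Option.some.inj (congrArg Prod.fst h)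
  · intro u v hv
    have hd : v ∈ S.D.dom := Or.inl ⟨u, hv⟩
    show u ∈ unAtRaw S (ιP S v).2.1.1 (ιP S v).2.1.2
    rw [ιP_pos S hd]
    exact (M0 S).mod.2.1 u v hv
  · intro r pq hpq
    have hd1 : pq.1 ∈ S.D.dom := Or.inr ⟨r, pq.2, Or.inl hpq⟩
    have hd2 : pq.2 ∈ S.D.dom := Or.inr ⟨r, pq.1, Or.inr hpq⟩
    show (ιP S pq.1, ιP S pq.2) ∈ binP S r
    rw [ιP_pos S hd1, ιP_pos S hd2]
    refine ⟨rfl, Or.inl ⟨rfl, rfl, ?_⟩⟩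
    rw [glue, if_pos (Or.inr (Or.inr ⟨⟨pq.1, hd1, rfl⟩, ⟨pq.2, hd2, rfl⟩⟩))]
    exact (M0 S).mod.2.2.1 r pq hpq

end SatP
noncomputable section HomG

attribute [local instance] Classical.propDecidable

variable {U R : Type} (S : Setup U R)

structure Target (S : Setup U R) : Type 1 where
  W : Type
  ι : S.V → W
  un : U → Set W
  bin : R → Set (W × W)
  mod : IsDLMod S.O.toOnt S.D ι un bin

variable (T : Target S)

lemma modA : IsDLMod S.O.toOnt S.D (fun d => (T.ι d, true)) (lkUn T.un) (lkBin T.bin) :=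
  lk_mod T.mod S.hir

noncomputable def g0 : (M0 S).W → T.W × Bool :=
  ((M0 S).hom (T.W × Bool) (fun d => (T.ι d, true)) (lkUn T.un) (lkBin T.bin)
    (modA S T)).choose

lemma g0_spec :
    (∀ u x, x ∈ NbhdM (M0 S).bin ((M0 S).ι S.a) → x ∈ (M0 S).un u →
      g0 S T x ∈ lkUn T.un u) ∧
    (∀ r x y, x ∈ NbhdM (M0 S).bin ((M0 S).ι S.a) → y ∈ NbhdM (M0 S).bin ((M0 S).ι S.a) →
      (x, y) ∈ (M0 S).bin r → (g0 S T x, g0 S T y) ∈ lkBin T.bin r) ∧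
    (∀ d ∈ S.D.dom, g0 S T ((M0 S).ι d) = (T.ι d, true)) :=
  ((M0 S).hom (T.W × Bool) (fun d => (T.ι d, true)) (lkUn T.un) (lkBin T.bin)
    (modA S T)).choose_spec

def GoodT (s : Seed S) (t : Fin (s.n + 1) → T.W × Bool) : Prop :=
  IsDLMod S.O.toOnt (sInst S s) t (lkUn T.un) (lkBin T.bin)

noncomputable def homFor (s : Seed S) (t : Fin (s.n + 1) → T.W × Bool) :
    (mat1 S s).W → T.W × Bool :=
  if h : GoodT S T s t then ((mat1 S s).hom (T.W × Bool) t (lkUn T.un) (lkBin T.bin) h).choose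
  else fun _ => t 0

lemma homFor_spec {s : Seed S} {t : Fin (s.n + 1) → T.W × Bool} (h : GoodT S T s t) :
    (∀ u x, x ∈ NbhdM (mat1 S s).bin ((mat1 S s).ι 0) → x ∈ (mat1 S s).un u →
      homFor S T s t x ∈ lkUn T.un u) ∧
    (∀ r x y, x ∈ NbhdM (mat1 S s).bin ((mat1 S s).ι 0) →
      y ∈ NbhdM (mat1 S s).bin ((mat1 S s).ι 0) →
      (x, y) ∈ (mat1 S s).bin r → (homFor S T s t x, homFor S T s t y) ∈ lkBin T.bin r) ∧
    (∀ j, homFor S T s t ((mat1 S s).ι j) = t j) := by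
  rw [homFor, dif_pos h]
  obtain ⟨h1, h2, h3⟩ :=
    ((mat1 S s).hom (T.W × Bool) t (lkUn T.un) (lkBin T.bin) h).choose_spec
  exact ⟨h1, h2, fun j => h3 j (sInst_dom S s j)⟩

noncomputable def G (y : L0 S) : List (BigW S) → T.W × Bool
  | [] => g0 S T y.1
  | (b :: []) =>
      homFor S T b.1 (Fin.cases (g0 S T y.1) (fun i =>
        if h : ∃ hy : ¬ y = rt0 S, b.1 = seed0 S y hy then
          g0 S T ((enum S h.choose (Fin.cast (congrArg Seed.n h.choose_spec) i) : L0 S)).1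
        else g0 S T y.1)) b.2.1
  | (b :: b' :: l) =>
      homFor S T b.1 (Fin.cases (G y (b' :: l)) (fun _ => G y l)) b.2.1

noncomputable def asg (y : L0 S) : List (BigW S) → (s : Seed S) → Fin (s.n + 1) → T.W × Bool
  | [], s => Fin.cases (G S T y []) (fun i =>
      if h : ∃ hy : ¬ y = rt0 S, s = seed0 S y hy then
        g0 S T ((enum S h.choose (Fin.cast (congrArg Seed.n h.choose_spec) i) : L0 S)).1
      else g0 S T y.1)
  | (b' :: l), s => Fin.cases (G S T y (b' :: l)) (fun _ => G S T y l)

lemma G_cons (y : L0 S) (b : BigW S) (l : List (BigW S)) :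
    G S T y (b :: l) = homFor S T b.1 (asg S T y l b.1) b.2.1 := by
  cases l <;> rfl

lemma asg_zero (y : L0 S) (l : List (BigW S)) (s : Seed S) :
    asg S T y l s 0 = G S T y l := by
  cases l <;> rfl

lemma asg_succ_cons (y : L0 S) (b' : BigW S) (l : List (BigW S)) (s : Seed S)
    (i : Fin s.n) : asg S T y (b' :: l) s i.succ = G S T y l := by
  rw [asg]
  simp only [Fin.cases_succ]

lemma asg_succ_nil (y : L0 S) (hy : ¬ y = rt0 S) (i : Fin (seed0 S y hy).n) :
    asg S T y [] (seed0 S y hy) i.succ = g0 S T ((enum S hy i : L0 S)).1 := by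
  rw [asg]
  simp only [Fin.cases_succ]
  have hex : ∃ _ : ¬ y = rt0 S, True := ⟨hy, trivial⟩
  rw [dif_pos hex]
  rfl

end HomG
noncomputable section GInv

attribute [local instance] Classical.propDecidable

variable {U R : Type} (S : Setup U R) (T : Target S)

lemma G_nil_un (y : L0 S) : ∀ u, u ∈ unAtRaw S y [] → G S T y [] ∈ lkUn T.un u := by
  intro u hu
  exact (g0_spec S T).1 u y.1 y.2 hu

lemma G_nil_seed (y : L0 S) :
    ∀ s, seedAt S y [] = some s → GoodT S T s (asg S T y [] s) := by
  intro s hs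
  by_cases hy : y = rt0 S
  · rw [seedAt, dif_pos hy] at hs
    exact absurd hs.symm (Option.some_ne_none s)
  rw [seedAt, dif_neg hy] at hs
  have hseq : seed0 S y hy = s := Option.some.inj hs
  subst hseq
  have hnamed : ∀ i : Fin (seed0 S y hy).n,
      ∃ d ∈ S.D.dom, (M0 S).ι d = ((enum S hy i : L0 S)).1 := by
    intro i
    obtain ⟨d, hd, he⟩ := (NbL_sub S hy (enum S hy i).2).1
    exact ⟨d, hd, he⟩
  have hmem : ∀ i : Fin (seed0 S y hy).n, ((enum S hy i : L0 S)).1 ∈ N0 S :=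
    fun i => ((enum S hy i : L0 S)).2
  have h0 : asg S T y [] (seed0 S y hy) 0 = g0 S T y.1 := asg_zero S T y [] _
  have hsv : ∀ i : Fin (seed0 S y hy).n,
      asg S T y [] (seed0 S y hy) i.succ = g0 S T ((enum S hy i : L0 S)).1 :=
    asg_succ_nil S T y hy
  -- edge facts
  have hBedge : ∀ (i : Fin (seed0 S y hy).n) (r : R), r ∈ (seed0 S y hy).tos i →
      (g0 S T y.1, g0 S T ((enum S hy i : L0 S)).1) ∈ lkBin T.bin r := by
    intro i r hr
    exact (g0_spec S T).2.1 r _ _ y.2 (hmem i) (glue_sub S _ _ hr)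
  have hBedge' : ∀ (i : Fin (seed0 S y hy).n) (r : R), r ∈ (seed0 S y hy).fros i →
      (g0 S T ((enum S hy i : L0 S)).1, g0 S T y.1) ∈ lkBin T.bin r := by
    intro i r hr
    exact (g0_spec S T).2.1 r _ _ (hmem i) y.2 (glue_sub S _ _ hr)
  have hdist : ∀ i : Fin (seed0 S y hy).n, g0 S T y.1 ≠ g0 S T ((enum S hy i : L0 S)).1 := by
    intro i heq
    obtain ⟨r, hr | hr⟩ := (seed0 S y hy).hne i
    · have h2 := hBedge i r hr
      rw [heq] at h2
      exact lk_loopfree T.bin r _ h2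
    · have h2 := hBedge' i r hr
      rw [heq] at h2
      exact lk_loopfree T.bin r _ h2
  refine ⟨?_, ?_, ?_, (modA S T).2.2.2⟩
  · -- injectivity of the assignment
    intro j j' hjj
    induction j using Fin.cases with
    | zero =>
      induction j' using Fin.cases with
      | zero => rfl
      | succ i' =>
        rw [h0, hsv] at hjj
        exact absurd hjj (hdist i')
    | succ i =>
      induction j' using Fin.cases with
      | zero =>
        rw [h0, hsv] at hjj
        exact absurd hjj.symm (hdist i)
      | succ i' =>
        rw [hsv, hsv] at hjj
        obtain ⟨d, hd, he⟩ := hnamed i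
        obtain ⟨d', hd', he'⟩ := hnamed i'
        rw [← he, ← he', (g0_spec S T).2.2 d hd, (g0_spec S T).2.2 d' hd'] at hjj
        have hdd : d = d' := T.mod.1 (congrArg Prod.fst hjj)
        have hzz : (enum S hy i : L0 S) = (enum S hy i' : L0 S) := by
          apply Subtype.ext
          rw [← he, ← he', hdd]
        have : i = i' := (enum S hy).injective (Subtype.ext hzz)
        rw [this]
  · -- unary facts
    rintro u j (⟨i, rfl, hu⟩ | ⟨rfl, hu⟩)
    · rw [hsv]
      exact (g0_spec S T).1 u _ (hmem i) hu
    · rw [h0]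
      exact (g0_spec S T).1 u y.1 y.2 hu
  · -- binary facts
    rintro r p ⟨i, ⟨hp, hr⟩ | ⟨hp, hr⟩⟩
    · rw [hp]
      show (asg S T y [] _ 0, asg S T y [] _ i.succ) ∈ lkBin T.bin r
      rw [h0, hsv]
      exact hBedge i r hr
    · rw [hp]
      show (asg S T y [] _ i.succ, asg S T y [] _ 0) ∈ lkBin T.bin r
      rw [h0, hsv]
      exact hBedge' i r hr

lemma G_inv : ∀ (n : ℕ) (l : List (BigW S)), l.length ≤ n → ∀ y : L0 S, Valid S y l →
    (∀ u, u ∈ unAtRaw S y l → G S T y l ∈ lkUn T.un u) ∧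
    (∀ s, seedAt S y l = some s → GoodT S T s (asg S T y l s)) := by
  intro n
  induction n with
  | zero =>
    intro l hl y hv
    have hnil : l = [] := List.length_eq_zero_iff.1 (Nat.le_zero.1 hl)
    subst hnil
    exact ⟨G_nil_un S T y, G_nil_seed S T y⟩
  | succ n ih =>
    intro l hl y hv
    cases l with
    | nil => exact ⟨G_nil_un S T y, G_nil_seed S T y⟩
    | cons b l' =>
      have hl' : l'.length ≤ n := by
        simp only [List.length_cons] at hl
        omega
      have hv' : Valid S y l' := hv.1
      have hsp : seedAt S y l' = some b.1 := hv.2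
      obtain ⟨ihU, ihS⟩ := ih l' hl' y hv'
      have hGood' : GoodT S T b.1 (asg S T y l' b.1) := ihS b.1 hsp
      have spec' := homFor_spec S T hGood'
      have hGc : G S T y (b :: l') = homFor S T b.1 (asg S T y l' b.1) b.2.1 :=
        G_cons S T y b l'
      have hcnb : b.2.1 ∈ NbhdM (mat1 S b.1).bin ((mat1 S b.1).ι 0) := b.2.2.1
      have hroot0 : homFor S T b.1 (asg S T y l' b.1) ((mat1 S b.1).ι 0) = G S T y l' := by
        rw [spec'.2.2 0, asg_zero]
      have hA : ∀ u, u ∈ unAtRaw S y (b :: l') → G S T y (b :: l') ∈ lkUn T.un u := by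
        intro u hu
        rw [hGc]
        exact spec'.1 u b.2.1 hcnb hu
      refine ⟨hA, ?_⟩
      intro s hs
      have hseq : childSeed S b.1 b.2 = s := Option.some.inj hs
      subst hseq
      have h0 : asg S T y (b :: l') (childSeed S b.1 b.2) 0 = G S T y (b :: l') :=
        asg_zero S T y _ _
      have hsv : ∀ i : Fin (childSeed S b.1 b.2).n,
          asg S T y (b :: l') (childSeed S b.1 b.2) i.succ = G S T y l' :=
        fun i => asg_succ_cons S T y b l' _ i
      have hBedge : ∀ (i : Fin (childSeed S b.1 b.2).n) (r : R),
          r ∈ (childSeed S b.1 b.2).tos i →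
          (G S T y (b :: l'), G S T y l') ∈ lkBin T.bin r := by
        intro i r hr
        have h2 := spec'.2.1 r b.2.1 ((mat1 S b.1).ι 0) hcnb (mem_nbhd_self _ _) hr
        rw [hroot0] at h2
        rw [hGc]
        exact h2
      have hBedge' : ∀ (i : Fin (childSeed S b.1 b.2).n) (r : R),
          r ∈ (childSeed S b.1 b.2).fros i →
          (G S T y l', G S T y (b :: l')) ∈ lkBin T.bin r := by
        intro i r hr
        have h2 := spec'.2.1 r ((mat1 S b.1).ι 0) b.2.1 (mem_nbhd_self _ _) hcnb hr
        rw [hroot0] at h2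
        rw [hGc]
        exact h2
      have hdist : G S T y (b :: l') ≠ G S T y l' := by
        intro heq
        obtain ⟨r, hr | hr⟩ := (childSeed S b.1 b.2).hne (fin0 S _)
        · have h2 := hBedge (fin0 S _) r hr
          rw [heq] at h2
          exact lk_loopfree T.bin r _ h2
        · have h2 := hBedge' (fin0 S _) r hr
          rw [heq] at h2
          exact lk_loopfree T.bin r _ h2
      refine ⟨?_, ?_, ?_, (modA S T).2.2.2⟩
      · intro j j' hjj
        induction j using Fin.cases with
        | zero =>
          induction j' using Fin.cases with
          | zero => rfl
          | succ i' =>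
            rw [h0, hsv] at hjj
            exact absurd hjj hdist
        | succ i =>
          induction j' using Fin.cases with
          | zero =>
            rw [h0, hsv] at hjj
            exact absurd hjj.symm hdist
          | succ i' =>
            have h1 : i.1 < 1 := i.isLt
            have h2 : i'.1 < 1 := i'.isLt
            have : i = i' := Fin.ext (by omega)
            rw [this]
      · rintro u j (⟨i, rfl, hu⟩ | ⟨rfl, hu⟩)
        · rw [hsv]
          have h2 := spec'.1 u ((mat1 S b.1).ι 0) (mem_nbhd_self _ _) hu
          rw [hroot0] at h2
          exact h2
        · rw [h0]
          exact hA u hu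
      · rintro r p ⟨i, ⟨hp, hr⟩ | ⟨hp, hr⟩⟩
        · rw [hp]
          show (asg S T y (b :: l') _ 0, asg S T y (b :: l') _ i.succ) ∈ lkBin T.bin r
          rw [h0, hsv]
          exact hBedge i r hr
        · rw [hp]
          show (asg S T y (b :: l') _ i.succ, asg S T y (b :: l') _ 0) ∈ lkBin T.bin r
          rw [h0, hsv]
          exact hBedge' i r hr

lemma G_un {y : L0 S} {l : List (BigW S)} (hv : Valid S y l) :
    ∀ u, u ∈ unAtRaw S y l → G S T y l ∈ lkUn T.un u :=
  (G_inv S T l.length l le_rfl y hv).1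

lemma G_good {y : L0 S} {l : List (BigW S)} (hv : Valid S y l) {s : Seed S}
    (hs : seedAt S y l = some s) : GoodT S T s (asg S T y l s) :=
  (G_inv S T l.length l le_rfl y hv).2 s hs

lemma G_bin {r : R} {y z : L0 S} {l m : List (BigW S)} (hvl : Valid S y l)
    (hvm : Valid S z m) (h : binRaw S r (y, l) (z, m)) :
    (G S T y l, G S T z m) ∈ lkBin T.bin r := by
  rcases binRaw_inv S hvl hvm h with ⟨hl, hm, h3⟩ | ⟨s, c, rfl, hm, hs, h4⟩ |
      ⟨s, c, rfl, hl, hs, h4⟩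
  · subst hl; subst hm
    exact (g0_spec S T).2.1 r _ _ y.2 z.2 (glue_sub S _ _ h3)
  · subst hm
    have spec' := homFor_spec S T (G_good S T hvl hs)
    have h2 := spec'.2.1 r ((mat1 S s).ι 0) c.1 (mem_nbhd_self _ _) c.2.1 h4
    rw [spec'.2.2 0, asg_zero] at h2
    have hGc : G S T z (⟨s, c⟩ :: l) = homFor S T s (asg S T z l s) c.1 :=
      G_cons S T z ⟨s, c⟩ l
    rw [hGc]
    exact h2
  · subst hl
    have spec' := homFor_spec S T (G_good S T hvm hs)
    have h2 := spec'.2.1 r c.1 ((mat1 S s).ι 0) c.2.1 (mem_nbhd_self _ _) h4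
    rw [spec'.2.2 0, asg_zero] at h2
    have hGc : G S T z (⟨s, c⟩ :: m) = homFor S T s (asg S T z m s) c.1 :=
      G_cons S T z ⟨s, c⟩ m
    rw [hGc]
    exact h2

lemma G_named (d : S.V) (hd : d ∈ S.D.dom) :
    G S T ⟨(M0 S).ι d, mem_N0_of_dom S hd⟩ [] = (T.ι d, true) :=
  (g0_spec S T).2.2 d hd

end GInv
noncomputable section Final

attribute [local instance] Classical.propDecidable

variable {U R : Type}

lemma main_mat (S : Setup U R) :
    ∃ (W : Type) (ι : S.V → W) (un : U → Set W) (bin : R → Set (W × W)),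
      IsDLMat S.O.toOnt S.D ι un bin := by
  refine ⟨WP S, ιP S, unP S, binP S, modP S, ?_⟩
  intro k qs aa ha
  constructor
  · rintro ⟨q, hq, hans⟩
    intro W' ι' un' bin' hmod'
    set T : Target S := ⟨W', ι', un', bin', hmod'⟩ with hT
    set g' : WP S → W' := fun x => (G S T x.2.1.1 x.2.1.2).1 with hg'
    refine ⟨q, hq, ?_⟩
    have h1 : DLCQAns un' bin' q (g' ∘ (ιP S ∘ aa)) := by
      refine cq_hom g' ?_ ?_ hans
      · intro u x hx
        exact (G_un S T x.2.2 u hx : G S T x.2.1.1 x.2.1.2 ∈ lkUn T.un u)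
      · intro r p hp
        have hraw : binRaw S r (p.1.2.1.1, p.1.2.1.2) (p.2.2.1.1, p.2.2.1.2) := hp.2
        exact (G_bin S T p.1.2.2 p.2.2.2 hraw).1
    have h2 : g' ∘ (ιP S ∘ aa) = ι' ∘ aa := by
      funext i
      have hd := ha i
      show g' (ιP S (aa i)) = ι' (aa i)
      rw [hg']
      simp only
      rw [ιP_pos S hd]
      show (G S T ⟨(M0 S).ι (aa i), mem_N0_of_dom S hd⟩ []).1 = ι' (aa i)
      rw [G_named S T (aa i) hd]
    rw [← h2]
    exact h1
  · intro hcert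
    exact hcert (WP S) (ιP S) (unP S) (binP S) (modP S)

lemma cpt_size_pos {C : Cpt U R} : 1 ≤ C.size := by
  cases C <;> simp [Cpt.size] <;> omega

lemma size_zero_case (O : DLOntL U R) (h0 : O.size = 0) (V : Type) (D : DLInst U R V) :
    ∃ (W : Type) (ι : V → W) (un : U → Set W) (bin : R → Set (W × W)),
      IsDLMat O.toOnt D ι un bin := by
  have hCI : O.CIs = [] := by
    cases hc : O.CIs with
    | nil => rfl
    | cons p l =>
      exfalso
      unfold DLOntL.size at h0
      rw [hc] at h0
      simp only [List.map_cons, List.sum_cons] at h0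
      omega
  have hRI : O.RIs = [] := by
    unfold DLOntL.size at h0
    have h1 : 3 * O.RIs.length = 0 := by omega
    have h2 : O.RIs.length = 0 := by omega
    exact List.length_eq_zero_iff.1 h2
  have hsat : O.toOnt.Sat D.un D.bin := by
    constructor
    · intro p hp
      have hp' : p ∈ O.CIs := hp
      rw [hCI] at hp'
      exact absurd hp' List.not_mem_nil
    · intro p hp
      have hp' : p ∈ O.RIs := hp
      rw [hRI] at hp'
      exact absurd hp' List.not_mem_nil
  have hmod : IsDLMod O.toOnt D id D.un D.bin :=
    ⟨Function.injective_id, fun u v hv => hv, fun r p hp => hp, hsat⟩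
  refine ⟨V, id, D.un, D.bin, hmod, ?_⟩
  intro k qs aa ha
  constructor
  · rintro ⟨q, hq, hans⟩
    intro W' ι' un' bin' hmod'
    refine ⟨q, hq, ?_⟩
    have h1 : DLCQAns un' bin' q (ι' ∘ (id ∘ aa)) :=
      cq_hom ι' (fun u x hx => hmod'.2.1 u x hx)
        (fun r p hp => hmod'.2.2.1 r p hp) hans
    exact h1
  · intro hcert
    exact hcert V id D.un D.bin hmod

end Final
/-- Let `O` be an ALCHIQ ontology of depth 1.  If for every irreflexive bouquet `D` that is
consistent with `O`, has outdegree at most `|O|`, and uses only relations of `O`, there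
exists a 1-materialization of `O` and `D`, then `O` is materializable for the class of all
such bouquets: each of them has a full materialization. -/
theorem stmt13 {U R : Type} (O : DLOntL U R) (hdepth : O.depthLE 1)
    (h1 : ∀ (V : Type) (D : DLInst U R V) (a : V), IsBouquet D a → Irrefl D →
      SigIn D O → OutdegLE D a O.size → DLConsistent O.toOnt D →
      OneMaterializable O D a) :
    ∀ (V : Type) (D : DLInst U R V) (a : V), IsBouquet D a → Irrefl D →
      SigIn D O → OutdegLE D a O.size → DLConsistent O.toOnt D →
      ∃ (W : Type) (ι : V → W) (un : U → Set W) (bin : R → Set (W × W)),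
        IsDLMat O.toOnt D ι un bin := by
  intro V D a hbq hir hsg hdeg hcons
  by_cases hsz : 1 ≤ O.size
  · exact main_mat ⟨O, hdepth, h1, hsz, V, D, a, hbq, hir, hsg, hdeg, hcons⟩
  · have h0 : O.size = 0 := by omega
    exact size_zero_case O h0 V D
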